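/- arXiv:1910.11154 — 4 statements merged into one kernel-verified Lean document; each statement's English description precedes it below -/
import Mathlib

section
/- In the Hotelling model with n = 2 vendors on the circle, every location vector x ∈ [0,1]^2 is an equilibrium. -/
noncomputable section

/-- Shortest arc distance on the circle of circumference 1. -/
def circleDist (x y : ℝ) : ℝ := min |x - y + 1| (min |x - y| |x - y - 1|)

open scoped Classical

/-- The set of vendors nearest to the customer at `y`. -/
def nearest {n : ℕ} (ξ : Fin n → ℝ) (y : ℝ) : Finset (Fin n) :=
  Finset.univ.filter fun j => ∀ i, circleDist (ξ j) y ≤ circleDist (ξ i) y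

/-- Density of demand of customer `y` going to vendor `k`. -/
def rho {n : ℕ} (ξ : Fin n → ℝ) (k : Fin n) (y : ℝ) : ℝ :=
  if k ∈ nearest ξ y then (1 : ℝ) / (nearest ξ y).card else 0

/-- Profit of vendor `k`. -/
def profit {n : ℕ} (k : Fin n) (ξ : Fin n → ℝ) : ℝ :=
  ∫ y in (0:ℝ)..1, rho ξ k y

/-- Equilibrium: no vendor can strictly increase profit by unilateral relocation. -/
def IsEquilibrium {n : ℕ} (x : Fin n → ℝ) : Prop :=
  ∀ k : Fin n, ∀ x' ∈ Set.Icc (0:ℝ) 1,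
    profit k (Function.update x k x') ≤ profit k x

/-- Length of the cyclic gap `I_j = [x_j, x_{j+1}]` (for sorted `x` with `x 0 = 0`). -/
def gap {n : ℕ} [NeZero n] (x : Fin n → ℝ) (j : Fin n) : ℝ :=
  (if (j : ℕ) + 1 = n then 1 else 0) + x (j + 1) - x j

/-- The right endpoint of gap `I_j`, unwrapped to the real line. -/
def nextVal {n : ℕ} [NeZero n] (x : Fin n → ℝ) (j : Fin n) : ℝ :=
  (if (j : ℕ) + 1 = n then 1 else 0) + x (j + 1)

/-- Maximum cyclic gap length `|Ī|`. -/
def maxGap {n : ℕ} [NeZero n] (x : Fin n → ℝ) : ℝ := ⨆ j, gap x j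

/-! ### Auxiliary development for the two-vendor case -/

/-- Periodic distance to the nearest integer. -/
def Dd (t : ℝ) : ℝ := min (Int.fract t) (1 - Int.fract t)

lemma Dd_per (t : ℝ) : Dd (t + 1) = Dd t := by
  have : Int.fract (t + 1) = Int.fract t := by
    simpa using Int.fract_add_int t 1
  simp [Dd, this]

lemma Dd_neg (t : ℝ) : Dd (-t) = Dd t := by
  by_cases h : Int.fract t = 0
  · have h' : Int.fract (-t) = 0 := Int.fract_neg_eq_zero.mpr h
    simp [Dd, h, h']
  · rw [Dd, Int.fract_neg h, Dd, min_comm]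
    ring_nf

lemma circleDist_eq {a y : ℝ} (ha : a ∈ Set.Icc (0:ℝ) 1) (hy : y ∈ Set.Icc (0:ℝ) 1) :
    circleDist a y = Dd (a - y) := by
  obtain ⟨ha0, ha1⟩ := ha
  obtain ⟨hy0, hy1⟩ := hy
  set t := a - y with ht
  have h1 : -1 ≤ t := by simp [ht]; linarith
  have h2 : t ≤ 1 := by simp [ht]; linarith
  rcases le_or_gt 0 t with h0 | h0
  · rcases lt_or_eq_of_le h2 with h3 | h3
    · have hf : Int.fract t = t := Int.fract_eq_self.mpr ⟨h0, h3⟩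
      rw [circleDist, Dd, hf, abs_of_nonneg (by linarith : (0:ℝ) ≤ t + 1),
        abs_of_nonneg h0, abs_of_nonpos (by linarith : t - 1 ≤ 0)]
      have : min t (-(t - 1)) ≤ t + 1 := le_trans (min_le_left _ _) (by linarith)
      rw [min_eq_right this]
      congr 1
      ring
    · have hf : Int.fract t = 0 := by rw [h3]; exact Int.fract_one
      rw [circleDist, Dd, hf, ← ht, h3]
      norm_num
  · have hf : Int.fract t = t + 1 := by
      have := Int.fract_add_intCast t 1
      rw [← this]
      push_cast
      exact Int.fract_eq_self.mpr ⟨by linarith, by linarith⟩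
    rw [circleDist, Dd, hf, abs_of_nonneg (by linarith : (0:ℝ) ≤ t + 1),
      abs_of_nonpos (le_of_lt h0), abs_of_nonpos (by linarith : t - 1 ≤ 0)]
    have h4 : -t ≤ -(t - 1) := by linarith
    rw [min_eq_left h4]
    congr 1
    ring

/-- Abstract demand share. -/
def Ff (u v : ℝ) : ℝ := if u ≤ v then (if v ≤ u then 1/2 else 1) else 0

lemma Ff_add (u v : ℝ) : Ff u v + Ff v u = 1 := by
  by_cases h : u ≤ v
  · by_cases h' : v ≤ u
    · simp [Ff, h, h']; norm_num
    · simp [Ff, h, h']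
  · have h' : v ≤ u := le_of_not_ge h
    simp [Ff, h, h']

lemma fin2_cases (k i : Fin 2) : i = k ∨ i = k + 1 := by
  revert k i; decide

lemma fin2_ne (k : Fin 2) : k + 1 ≠ k := by fin_cases k <;> decide

lemma rho_eq (ξ : Fin 2 → ℝ) (k : Fin 2) (y : ℝ) :
    rho ξ k y = Ff (circleDist (ξ k) y) (circleDist (ξ (k + 1)) y) := by
  set d : Fin 2 → ℝ := fun i => circleDist (ξ i) y with hd
  have mem_iff : ∀ j : Fin 2, (j ∈ nearest ξ y) ↔ (d j ≤ d k ∧ d j ≤ d (k + 1)) := by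
    intro j
    simp only [nearest, Finset.mem_filter, Finset.mem_univ, true_and]
    constructor
    · intro h; exact ⟨h k, h (k + 1)⟩
    · intro h i
      rcases fin2_cases k i with h' | h' <;> rw [h']
      · exact h.1
      · exact h.2
  by_cases h1 : d k ≤ d (k + 1)
  · by_cases h2 : d (k + 1) ≤ d k
    · have huniv : nearest ξ y = Finset.univ := by
        apply Finset.eq_univ_iff_forall.mpr
        intro j
        rw [mem_iff]
        rcases fin2_cases k j with h' | h' <;> rw [h'] <;> constructor <;> linarith
      rw [rho, if_pos (by rw [huniv]; exact Finset.mem_univ k), huniv, Ff,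
        if_pos h1, if_pos h2]
      simp
    · have hsing : nearest ξ y = {k} := by
        ext j
        rw [mem_iff, Finset.mem_singleton]
        constructor
        · intro hj
          rcases fin2_cases k j with h' | h'
          · exact h'
          · exact absurd (h'.symm ▸ hj.1 : d (k+1) ≤ d k) h2
        · intro hj; rw [hj]; exact ⟨le_refl _, h1⟩
      rw [rho, if_pos (by rw [hsing]; exact Finset.mem_singleton_self k), hsing, Ff,
        if_pos h1, if_neg h2]
      simp
  · have hk : k ∉ nearest ξ y := by
      rw [mem_iff]
      intro h
      exact h1 h.2
    rw [rho, if_neg hk, Ff, if_neg h1]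

lemma Ff_meas (a b : ℝ) :
    Measurable (fun y : ℝ => Ff (Dd (a - y)) (Dd (b - y))) := by
  have hD : Measurable Dd := by
    exact (measurable_fract).min (measurable_const.sub measurable_fract)
  have hA : Measurable (fun y : ℝ => Dd (a - y)) := hD.comp (measurable_const.sub measurable_id)
  have hB : Measurable (fun y : ℝ => Dd (b - y)) := hD.comp (measurable_const.sub measurable_id)
  unfold Ff
  exact Measurable.ite (measurableSet_le hA hB)
    (Measurable.ite (measurableSet_le hB hA) measurable_const measurable_const)
    measurable_const

lemma Ff_bound (u v : ℝ) : ‖Ff u v‖ ≤ 1 := by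
  rw [Ff, Real.norm_eq_abs]
  split_ifs <;> rw [abs_of_nonneg (by norm_num)] <;> norm_num

lemma Ff_intervalIntegrable (a b : ℝ) :
    IntervalIntegrable (fun y : ℝ => Ff (Dd (a - y)) (Dd (b - y))) MeasureTheory.volume 0 1 := by
  rw [intervalIntegrable_iff]
  apply MeasureTheory.Integrable.mono' (g := fun _ => (1:ℝ))
  · exact (MeasureTheory.integrableOn_const_iff (C := (1:ℝ))).mpr (Or.inr (by simp [Set.uIoc]))
  · exact ((Ff_meas a b).aestronglyMeasurable)
  · exact Filter.Eventually.of_forall fun y => Ff_bound _ _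

lemma half_integral (a b : ℝ) :
    ∫ y in (0:ℝ)..1, Ff (Dd (a - y)) (Dd (b - y)) = 1/2 := by
  set f : ℝ → ℝ := fun y => Ff (Dd (a - y)) (Dd (b - y)) with hf
  set g : ℝ → ℝ := fun y => Ff (Dd (b - y)) (Dd (a - y)) with hg
  have hfint : IntervalIntegrable f MeasureTheory.volume 0 1 := Ff_intervalIntegrable a b
  have hgint : IntervalIntegrable g MeasureTheory.volume 0 1 := Ff_intervalIntegrable b a
  have hper : Function.Periodic f 1 := by
    intro y
    simp only [hf]
    have h1 : a - (y + 1) + 1 = a - y := by ring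
    have h2 : b - (y + 1) + 1 = b - y := by ring
    rw [← h1, ← h2, Dd_per, Dd_per]
  have hrefl : ∀ y, f (a + b - y) = g y := by
    intro y
    simp only [hf, hg]
    have h1 : a - (a + b - y) = -(b - y) := by ring
    have h2 : b - (a + b - y) = -(a - y) := by ring
    rw [h1, h2, Dd_neg, Dd_neg]
  have key : ∫ y in (0:ℝ)..1, g y = ∫ y in (0:ℝ)..1, f y := by
    calc ∫ y in (0:ℝ)..1, g y = ∫ y in (0:ℝ)..1, f (a + b - y) := by
          apply intervalIntegral.integral_congr
          intro y _
          exact (hrefl y).symm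
      _ = ∫ y in (a + b - 1)..(a + b - 0), f y :=
          intervalIntegral.integral_comp_sub_left f (a + b)
      _ = ∫ y in (a + b - 1)..((a + b - 1) + 1), f y := by norm_num
      _ = ∫ y in (0:ℝ)..(0 + 1), f y := hper.intervalIntegral_add_eq (a + b - 1) 0
      _ = ∫ y in (0:ℝ)..1, f y := by norm_num
  have hsum : (∫ y in (0:ℝ)..1, f y) + ∫ y in (0:ℝ)..1, g y = 1 := by
    rw [← intervalIntegral.integral_add hfint hgint]
    have : ∀ y, f y + g y = 1 := fun y => Ff_add _ _
    simp only [this]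
    simp
  rw [key] at hsum
  linarith

lemma profit_eq_half (ξ : Fin 2 → ℝ) (hξ : ∀ i, ξ i ∈ Set.Icc (0:ℝ) 1) (k : Fin 2) :
    profit k ξ = 1/2 := by
  rw [profit]
  have : ∫ y in (0:ℝ)..1, rho ξ k y
      = ∫ y in (0:ℝ)..1, Ff (Dd (ξ k - y)) (Dd (ξ (k + 1) - y)) := by
    apply intervalIntegral.integral_congr
    intro y hy
    have hy' : y ∈ Set.Icc (0:ℝ) 1 := by
      rwa [Set.uIcc_of_le (by norm_num : (0:ℝ) ≤ 1)] at hy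
    rw [rho_eq, circleDist_eq (hξ k) hy', circleDist_eq (hξ (k + 1)) hy']
  rw [this, half_integral]

theorem two_vendors_equilibrium (x : Fin 2 → ℝ) (hx : ∀ i, x i ∈ Set.Icc (0:ℝ) 1) :
    IsEquilibrium x := by
  intro k x' hx'
  have hupd : ∀ i, Function.update x k x' i ∈ Set.Icc (0:ℝ) 1 := by
    intro i
    by_cases h : i = k
    · rw [h, Function.update_self]; exact hx'
    · rw [Function.update_of_ne h]; exact hx i
  rw [profit_eq_half _ hupd, profit_eq_half _ hx]
end
end

section
/- If a location x = (x_1,…,x_n) with 0 = x_1 ≤ x_2 ≤ … ≤ x_n (n ≥ 2) is an equilibrium of the Hotelling model on the circle, then no point of the circle is occupied by 3 or more vendors. -/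
noncomputable section

open scoped Classical

-- AUX

lemma cd_eq_abs {u y : ℝ} (h : |u - y| ≤ 1/2) : circleDist u y = |u - y| := by
  obtain ⟨h1, h2⟩ := abs_le.1 h
  have hC : |u - y - 1| = 1 - (u - y) := by
    rw [abs_of_nonpos (by linarith)]; ring
  have hA : |u - y + 1| = u - y + 1 := abs_of_nonneg (by linarith)
  unfold circleDist
  have hBC : min |u - y| |u - y - 1| = |u - y| :=
    min_eq_left (by rw [hC]; rcases abs_cases (u - y) with ⟨e,_⟩|⟨e,_⟩ <;> linarith)
  have hAB : min |u - y + 1| |u - y| = |u - y| :=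
    min_eq_right (by rw [hA]; rcases abs_cases (u - y) with ⟨e,_⟩|⟨e,_⟩ <;> linarith)
  rw [hBC, hAB]

lemma key_lb {u y α β : ℝ} (hu0 : 0 ≤ u) (hu1 : u ≤ 1) (hα : 0 ≤ α) (hβ : β ≤ 1)
    (hside : u ≤ α ∨ β ≤ u) (hy1 : α ≤ y) (hy2 : y ≤ β) :
    min (y - α) (β - y) ≤ circleDist u y := by
  have hy0 : 0 ≤ y := le_trans hα hy1
  have hy1' : y ≤ 1 := le_trans hy2 hβ
  unfold circleDist
  refine le_min ?_ (le_min ?_ ?_)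
  · refine le_trans (min_le_right _ _) ?_
    rw [abs_of_nonneg (by linarith)]; linarith
  · rcases hside with h | h
    · refine le_trans (min_le_left _ _) ?_
      rw [abs_of_nonpos (by linarith)]; linarith
    · refine le_trans (min_le_right _ _) ?_
      rw [abs_of_nonneg (by linarith)]; linarith
  · refine le_trans (min_le_left _ _) ?_
    rw [abs_of_nonpos (by linarith)]; linarith

lemma mem_nearest {n : ℕ} {ξ : Fin n → ℝ} {y : ℝ} {k : Fin n} :
    k ∈ nearest ξ y ↔ ∀ i, circleDist (ξ k) y ≤ circleDist (ξ i) y := by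
  simp [nearest]

lemma rho_nonneg {n : ℕ} (ξ : Fin n → ℝ) (k : Fin n) (y : ℝ) : 0 ≤ rho ξ k y := by
  unfold rho; split <;> positivity

lemma rho_le_one {n : ℕ} (ξ : Fin n → ℝ) (k : Fin n) (y : ℝ) : rho ξ k y ≤ 1 := by
  unfold rho; split
  · rename_i h
    have h1 : 1 ≤ (nearest ξ y).card := Finset.card_pos.2 ⟨k, h⟩
    rw [div_le_one (by exact_mod_cast h1)]
    exact_mod_cast h1
  · norm_num

lemma continuous_cd (a : ℝ) : Continuous fun y : ℝ => circleDist a y := by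
  unfold circleDist; fun_prop

lemma measurable_rho {n : ℕ} (ξ : Fin n → ℝ) (k : Fin n) : Measurable (rho ξ k) := by
  have hA : ∀ j : Fin n, MeasurableSet {y : ℝ | j ∈ nearest ξ y} := by
    intro j
    have : {y : ℝ | j ∈ nearest ξ y}
        = ⋂ i, {y | circleDist (ξ j) y ≤ circleDist (ξ i) y} := by
      ext y; simp [mem_nearest]
    rw [this]
    exact MeasurableSet.iInter fun i =>
      measurableSet_le (continuous_cd (ξ j)).measurable (continuous_cd (ξ i)).measurable
  have hfib : ∀ S : Finset (Fin n), MeasurableSet {y : ℝ | nearest ξ y = S} := by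
    intro S
    have : {y : ℝ | nearest ξ y = S} =
        ⋂ j, (if j ∈ S then {y : ℝ | j ∈ nearest ξ y} else {y : ℝ | j ∈ nearest ξ y}ᶜ) := by
      ext y
      simp only [Set.mem_iInter, Set.mem_setOf_eq]
      constructor
      · rintro rfl
        intro j
        by_cases hj : j ∈ nearest ξ y <;> simp [hj]
      · intro h
        ext j
        have := h j
        by_cases hj : j ∈ S <;> simp [hj] at this <;> simp [hj, this]
    rw [this]
    refine MeasurableSet.iInter fun j => ?_
    by_cases hj : j ∈ S
    · rw [if_pos hj]; exact hA j
    · rw [if_neg hj]; exact (hA j).compl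
  have hrepr : rho ξ k = fun y => ∑ S : Finset (Fin n),
      ({y : ℝ | nearest ξ y = S}.indicator
        (fun _ => if k ∈ S then (1:ℝ)/S.card else 0)) y := by
    funext y
    rw [Finset.sum_eq_single (nearest ξ y)]
    · simp [Set.indicator, rho]
    · intro S _ hS
      apply Set.indicator_of_notMem
      simp only [Set.mem_setOf_eq]
      exact fun h => hS h.symm
    · simp
  rw [hrepr]
  exact Finset.measurable_sum _ fun S _ => Measurable.indicator measurable_const (hfib S)

lemma rho_intInt {n : ℕ} (ξ : Fin n → ℝ) (k : Fin n) (a b : ℝ) :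
    IntervalIntegrable (rho ξ k) MeasureTheory.volume a b := by
  refine IntervalIntegrable.mono_fun (intervalIntegrable_const (c := (1:ℝ)))
    ((measurable_rho ξ k).aestronglyMeasurable) ?_
  refine MeasureTheory.ae_of_all _ fun y => ?_
  simp only [Real.norm_eq_abs]
  rw [abs_of_nonneg (rho_nonneg ξ k y)]
  rw [abs_of_nonneg (by norm_num : (0:ℝ) ≤ 1)]
  exact rho_le_one ξ k y

lemma cd_eq_cases {u y w : ℝ} (h : circleDist u y = w) :
    |u - y + 1| = w ∨ |u - y| = w ∨ |u - y - 1| = w := by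
  unfold circleDist at h
  rcases min_cases |u - y + 1| (min |u - y| |u - y - 1|) with ⟨h1, _⟩ | ⟨h1, _⟩
  · left; rw [h1] at h; exact h
  · rw [h1] at h
    rcases min_cases |u - y| |u - y - 1| with ⟨h2, _⟩ | ⟨h2, _⟩ <;> rw [h2] at h
    · right; left; exact h
    · right; right; exact h

lemma cd_zero {y : ℝ} (h1 : 1/2 ≤ y) (h2 : y ≤ 1) : circleDist 0 y = 1 - y := by
  unfold circleDist
  rw [abs_of_nonneg (by linarith : (0:ℝ) - y + 1 ≥ 0),
      abs_of_nonpos (by linarith : (0:ℝ) - y ≤ 0),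
      abs_of_nonpos (by linarith : (0:ℝ) - y - 1 ≤ 0)]
  have hi : min (-((0:ℝ) - y)) (-((0:ℝ) - y - 1)) = -((0:ℝ)-y) := min_eq_left (by linarith)
  rw [hi, min_eq_left (by linarith)]
  ring

lemma three_set_aux {p u v : ℝ} (hp0 : 0 ≤ p) (hp1 : p ≤ 1) (hu0 : 0 ≤ u) (hv1 : v ≤ 1)
    (huv : u < v) (hu : p = u - 1 ∨ p = u ∨ p = u + 1) (hv : p = v - 1 ∨ p = v ∨ p = v + 1) :
    u = 0 ∧ v = 1 := by
  rcases hu with h|h|h <;> rcases hv with h'|h'|h' <;> constructor <;> linarith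

lemma rho_zero_L {n : ℕ} {x : Fin n → ℝ} {k2 j : Fin n} {p α β y : ℝ}
    (hp : x k2 = p) (hp0 : 0 ≤ p) (hp1 : p ≤ 1)
    (hj : x j = α) (hα : 0 ≤ α) (hβ : β ≤ 1)
    (hsd : x k2 ≤ α ∨ β ≤ x k2)
    (hy1 : α < y) (hy2 : y < (α + β)/2)
    (hnc : ¬(p = α - 1 ∨ p = α ∨ p = α + 1))
    (he1 : y ≠ (p + α)/2) (he2 : y ≠ (p + α + 1)/2) (he3 : y ≠ (p + α - 1)/2) :
    rho x k2 y = 0 := by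
  rw [rho, if_neg]
  intro hmem
  have hub : circleDist p y ≤ y - α := by
    have h := mem_nearest.1 hmem j
    rw [hp, hj] at h
    refine le_trans h ?_
    rw [cd_eq_abs (by rw [abs_of_nonpos (by linarith)]; linarith),
        abs_of_nonpos (by linarith)]
    linarith
  have hlb : y - α ≤ circleDist p y := by
    have h := key_lb hp0 hp1 hα hβ (hp ▸ hsd) (le_of_lt hy1) (by linarith)
    calc y - α = min (y - α) (β - y) := (min_eq_left (by linarith)).symm
    _ ≤ circleDist p y := h
  have heq : circleDist p y = y - α := le_antisymm hub hlb
  rcases cd_eq_cases heq with h | h | h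
  · rcases abs_cases (p - y + 1) with ⟨e, _⟩ | ⟨e, _⟩ <;> rw [e] at h
    · exact he2 (by linarith)
    · exact hnc (Or.inl (by linarith))
  · rcases abs_cases (p - y) with ⟨e, _⟩ | ⟨e, _⟩ <;> rw [e] at h
    · exact he1 (by linarith)
    · exact hnc (Or.inr (Or.inl (by linarith)))
  · rcases abs_cases (p - y - 1) with ⟨e, _⟩ | ⟨e, _⟩ <;> rw [e] at h
    · exact he3 (by linarith)
    · exact hnc (Or.inr (Or.inr (by linarith)))

lemma rho_zero_R {n : ℕ} {x : Fin n → ℝ} {k2 : Fin n} {p α β y : ℝ}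
    (hp : x k2 = p) (hp0 : 0 ≤ p) (hp1 : p ≤ 1)
    (hvd : ∃ i, circleDist (x i) y = β - y)
    (hα : 0 ≤ α) (hβ : β ≤ 1)
    (hsd : x k2 ≤ α ∨ β ≤ x k2)
    (hy1 : (α + β)/2 < y) (hy2 : y < β)
    (hnc : ¬(p = β - 1 ∨ p = β ∨ p = β + 1))
    (he1 : y ≠ (p + β)/2) (he2 : y ≠ (p + β + 1)/2) (he3 : y ≠ (p + β - 1)/2) :
    rho x k2 y = 0 := by
  rw [rho, if_neg]
  intro hmem
  obtain ⟨i, hi⟩ := hvd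
  have hub : circleDist p y ≤ β - y := by
    have h := mem_nearest.1 hmem i
    rw [hp, hi] at h
    exact h
  have hαy : α ≤ y := by linarith
  have hlb : β - y ≤ circleDist p y := by
    have h := key_lb hp0 hp1 hα hβ (hp ▸ hsd) hαy (le_of_lt hy2)
    calc β - y = min (y - α) (β - y) := (min_eq_right (by linarith)).symm
    _ ≤ circleDist p y := h
  have heq : circleDist p y = β - y := le_antisymm hub hlb
  rcases cd_eq_cases heq with h | h | h
  · rcases abs_cases (p - y + 1) with ⟨e, _⟩ | ⟨e, _⟩ <;> rw [e] at h
    · exact hnc (Or.inl (by linarith))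
    · exact he2 (by linarith)
  · rcases abs_cases (p - y) with ⟨e, _⟩ | ⟨e, _⟩ <;> rw [e] at h
    · exact hnc (Or.inr (Or.inl (by linarith)))
    · exact he1 (by linarith)
  · rcases abs_cases (p - y - 1) with ⟨e, _⟩ | ⟨e, _⟩ <;> rw [e] at h
    · exact hnc (Or.inr (Or.inr (by linarith)))
    · exact he3 (by linarith)

lemma null_seg {n : ℕ} (x : Fin n → ℝ) (k2 : Fin n) (c d e1 e2 e3 : ℝ)
    (hcd : c ≤ d)
    (hzero : ∀ y, c < y → y < d → y ≠ e1 → y ≠ e2 → y ≠ e3 → rho x k2 y = 0) :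
    (∫ y in c..d, rho x k2 y) ≤ 0 := by
  have h0 : (∫ y in c..d, (0:ℝ)) = 0 := by simp
  rw [← h0]
  refine intervalIntegral.integral_mono_ae_restrict hcd (rho_intInt _ _ _ _)
    intervalIntegrable_const ?_
  have hfin : MeasureTheory.volume ({c, d, e1, e2, e3} : Set ℝ) = 0 :=
    (Set.toFinite _).measure_zero _
  have hae1 : ∀ᵐ y ∂(MeasureTheory.volume.restrict (Set.Icc c d)),
      y ∉ ({c, d, e1, e2, e3} : Set ℝ) :=
    MeasureTheory.ae_restrict_of_ae (MeasureTheory.measure_eq_zero_iff_ae_notMem.mp hfin)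
  have hae2 : ∀ᵐ y ∂(MeasureTheory.volume.restrict (Set.Icc c d)), y ∈ Set.Icc c d :=
    MeasureTheory.ae_restrict_mem measurableSet_Icc
  filter_upwards [hae1, hae2] with y hy1 hy2
  simp only [Set.mem_insert_iff, Set.mem_singleton_iff, not_or] at hy1
  obtain ⟨hc', hd', he1, he2, he3⟩ := hy1
  rw [hzero y (lt_of_le_of_ne hy2.1 (Ne.symm hc')) (lt_of_le_of_ne hy2.2 hd') he1 he2 he3]

lemma deviation_lb {n : ℕ} (x : Fin n → ℝ) (k2 : Fin n) (α β : ℝ)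
    (hx0 : ∀ i, 0 ≤ x i) (hx1 : ∀ i, x i ≤ 1)
    (hα : 0 ≤ α) (hβ : β ≤ 1) (hαβ : α < β)
    (hside : ∀ i, x i ≤ α ∨ β ≤ x i) :
    (β - α)/2 ≤ profit k2 (Function.update x k2 ((α + β)/2)) := by
  set G := β - α with hG
  set m := (α + β)/2 with hm
  set x' := Function.update x k2 m with hx'
  have hGpos : 0 < G := by rw [hG]; linarith
  have hG1 : G ≤ 1 := by rw [hG]; linarith
  have hrho1 : ∀ y, m - G/4 < y → y < m + G/4 → rho x' k2 y = 1 := by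
    intro y hyl hyr
    have habs : |m - y| < G/4 := abs_lt.2 ⟨by linarith, by linarith⟩
    have hd : circleDist (x' k2) y = |m - y| := by
      rw [hx', Function.update_self]
      exact cd_eq_abs (by rcases abs_cases (m - y) with ⟨e, _⟩ | ⟨e, _⟩ <;> linarith)
    have hothers : ∀ i, i ≠ k2 → |m - y| < circleDist (x' i) y := by
      intro i hik
      rw [hx', Function.update_of_ne hik]
      have hyα : α ≤ y := by linarith
      have hyβ : y ≤ β := by linarith
      have h := key_lb (hx0 i) (hx1 i) hα hβ (hside i) hyα hyβ
      have h2 : G/4 ≤ min (y - α) (β - y) := le_min (by linarith) (by linarith)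
      linarith
    have hk2m : ∀ i, circleDist (x' k2) y ≤ circleDist (x' i) y := by
      intro i
      by_cases hik : i = k2
      · rw [hik]
      · rw [hd]; exact le_of_lt (hothers i hik)
    have hnear : nearest x' y = {k2} := by
      ext i
      simp only [Finset.mem_singleton, mem_nearest]
      constructor
      · intro h
        by_contra hik
        have h1 := h k2
        rw [hd] at h1
        exact absurd h1 (not_le.2 (hothers i hik))
      · intro h
        rw [h]
        exact hk2m
    rw [rho, if_pos (by rw [hnear]; exact Finset.mem_singleton_self k2), hnear]
    simp
  have h1 : (0:ℝ) ≤ m - G/4 := by rw [hm, hG]; linarith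
  have h2 : m + G/4 ≤ 1 := by rw [hm, hG]; linarith
  have h3 : m - G/4 ≤ m + G/4 := by linarith
  have hmid : G/2 ≤ ∫ y in (m - G/4)..(m + G/4), rho x' k2 y := by
    have hconst : (∫ y in (m - G/4)..(m + G/4), (1:ℝ)) = G/2 := by
      rw [intervalIntegral.integral_const, smul_eq_mul, mul_one]; ring
    rw [← hconst]
    refine intervalIntegral.integral_mono_ae_restrict h3 intervalIntegrable_const
      (rho_intInt _ _ _ _) ?_
    have hfin : MeasureTheory.volume ({m - G/4, m + G/4} : Set ℝ) = 0 :=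
      (Set.toFinite _).measure_zero _
    have hae1 : ∀ᵐ y ∂(MeasureTheory.volume.restrict (Set.Icc (m - G/4) (m + G/4))),
        y ∉ ({m - G/4, m + G/4} : Set ℝ) :=
      MeasureTheory.ae_restrict_of_ae (MeasureTheory.measure_eq_zero_iff_ae_notMem.mp hfin)
    have hae2 : ∀ᵐ y ∂(MeasureTheory.volume.restrict (Set.Icc (m - G/4) (m + G/4))),
        y ∈ Set.Icc (m - G/4) (m + G/4) :=
      MeasureTheory.ae_restrict_mem measurableSet_Icc
    filter_upwards [hae1, hae2] with y hy1 hy2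
    simp only [Set.mem_insert_iff, Set.mem_singleton_iff, not_or] at hy1
    rw [hrho1 y (lt_of_le_of_ne hy2.1 (Ne.symm hy1.1)) (lt_of_le_of_ne hy2.2 hy1.2)]
  have hsplit : profit k2 x' = (∫ y in (0:ℝ)..(m - G/4), rho x' k2 y)
      + ((∫ y in (m - G/4)..(m + G/4), rho x' k2 y)
        + (∫ y in (m + G/4)..(1:ℝ), rho x' k2 y)) := by
    unfold profit
    rw [intervalIntegral.integral_add_adjacent_intervals (rho_intInt _ _ _ _) (rho_intInt _ _ _ _),
        intervalIntegral.integral_add_adjacent_intervals (rho_intInt _ _ _ _) (rho_intInt _ _ _ _)]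
  have hnn1 : 0 ≤ ∫ y in (0:ℝ)..(m - G/4), rho x' k2 y :=
    intervalIntegral.integral_nonneg h1 (fun y _ => rho_nonneg _ _ _)
  have hnn2 : 0 ≤ ∫ y in (m + G/4)..(1:ℝ), rho x' k2 y :=
    intervalIntegral.integral_nonneg h2 (fun y _ => rho_nonneg _ _ _)
  rw [hsplit]
  rw [hG] at hmid ⊢
  linarith


theorem equilibrium_at_most_two_per_point {n : ℕ} [NeZero n] (hn : 2 ≤ n) (x : Fin n → ℝ)
    (hx0 : x 0 = 0) (hmono : Monotone x) (hx1 : ∀ j, x j ≤ 1)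
    (heq : IsEquilibrium x) :
    ∀ p : ℝ, (Finset.univ.filter fun k => x k = p).card ≤ 2 := by
  intro p
  by_contra hcard
  push_neg at hcard
  obtain ⟨k1, k2, k3, hk1, hk2, hk3, h12, h13, h23⟩ := Finset.two_lt_card_iff.1 hcard
  rw [Finset.mem_filter] at hk1 hk2 hk3
  have hpk1 : x k1 = p := hk1.2
  have hp2 : x k2 = p := hk2.2
  have hpk3 : x k3 = p := hk3.2
  have hnpos : 0 < n := Nat.pos_of_ne_zero (NeZero.ne n)
  have hx_nonneg : ∀ k, 0 ≤ x k := by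
    intro k
    have h0k : (0 : Fin n) ≤ k := by
      rw [Fin.le_def]
      simp
    have h := hmono h0k
    rw [hx0] at h
    exact h
  have hp0 : 0 ≤ p := hp2 ▸ hx_nonneg k2
  have hp1' : p ≤ 1 := hp2 ▸ hx1 k2
  -- subdivision of [0,1] by vendor positions
  set a : ℕ → ℝ := fun i => if h : i < n then x ⟨i, h⟩ else 1 with ha
  have haval : ∀ i (hi : i < n), a i = x ⟨i, hi⟩ := by
    intro i hi; simp only [ha]; rw [dif_pos hi]
  have ha0 : a 0 = 0 := by
    rw [haval 0 hnpos]
    have h00 : (⟨0, hnpos⟩ : Fin n) = 0 := by ext; simp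
    rw [h00, hx0]
  have han : a n = 1 := by simp only [ha]; rw [dif_neg (lt_irrefl n)]
  have hamono : Monotone a := by
    intro i j hij
    by_cases hj : j < n
    · have hi : i < n := lt_of_le_of_lt hij hj
      rw [haval i hi, haval j hj]
      exact hmono (by rw [Fin.le_def]; exact hij)
    · by_cases hi : i < n
      · rw [haval i hi]; simp only [ha]; rw [dif_neg hj]; exact hx1 _
      · simp only [ha]; rw [dif_neg hi, dif_neg hj]
  have ha_nonneg : ∀ i, 0 ≤ a i := fun i => ha0 ▸ hamono (Nat.zero_le i)
  have ha_le1 : ∀ i, a i ≤ 1 := by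
    intro i
    by_cases hi : i < n
    · rw [haval i hi]; exact hx1 _
    · simp only [ha]; rw [dif_neg hi]
  have hsd : ∀ (k : Fin n) (i : ℕ), i < n → x k ≤ a i ∨ a (i+1) ≤ x k := by
    intro k i hi
    by_cases hik : (k : ℕ) ≤ i
    · left; rw [haval i hi]; exact hmono (by rw [Fin.le_def]; exact hik)
    · right
      push_neg at hik
      have hkn : (k : ℕ) < n := k.isLt
      have hi1 : i + 1 < n := by omega
      rw [haval (i+1) hi1]
      exact hmono (by rw [Fin.le_def]; exact hik)
  -- maximal gap
  obtain ⟨i₀, hi₀mem, hi₀max⟩ := Finset.exists_max_image (Finset.range n)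
    (fun i => a (i+1) - a i) ⟨0, Finset.mem_range.2 hnpos⟩
  have hi₀n : i₀ < n := Finset.mem_range.1 hi₀mem
  set G := a (i₀+1) - a i₀ with hG
  have hgapG : ∀ i, i < n → a (i+1) - a i ≤ G := fun i hi => hi₀max i (Finset.mem_range.2 hi)
  have hsum1 : (∑ i ∈ Finset.range n, (a (i+1) - a i)) = 1 := by
    rw [Finset.sum_range_sub, han, ha0]; ring
  have hGpos : 0 < G := by
    by_contra hc
    push_neg at hc
    have h0 : (1:ℝ) ≤ 0 := by
      rw [← hsum1]
      exact Finset.sum_nonpos fun i hi => le_trans (hi₀max i hi) hc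
    linarith
  -- rho is at most 1/3 for the middle vendor
  have hrho3 : ∀ y, rho x k2 y ≤ 1/3 := by
    intro y
    rw [rho]
    split
    · rename_i hmem
      have hsub : ({k1, k2, k3} : Finset (Fin n)) ⊆ nearest x y := by
        intro j hj
        simp only [Finset.mem_insert, Finset.mem_singleton] at hj
        have hxj : x j = p := by rcases hj with rfl | rfl | rfl <;> assumption
        rw [mem_nearest]
        intro i
        calc circleDist (x j) y = circleDist (x k2) y := by rw [hxj, hp2]
        _ ≤ circleDist (x i) y := mem_nearest.1 hmem i
      have hc3 : 3 ≤ (nearest x y).card := by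
        have hcc : ({k1, k2, k3} : Finset (Fin n)).card = 3 := by
          rw [Finset.card_insert_of_notMem (by simp [h12, h13]),
              Finset.card_insert_of_notMem (by simp [h23]), Finset.card_singleton]
        rw [← hcc]
        exact Finset.card_le_card hsub
      have hcpos : (0:ℝ) < (nearest x y).card := by
        exact_mod_cast lt_of_lt_of_le (by norm_num) hc3
      rw [div_le_div_iff₀ hcpos (by norm_num)]
      have h3c : (3:ℝ) ≤ (nearest x y).card := by exact_mod_cast hc3
      linarith
    · norm_num
  -- per-piece bound
  have hpiece : ∀ i ∈ Finset.range n,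
      (∫ y in a i..a (i+1), rho x k2 y) ≤
      (if (p = a i - 1 ∨ p = a i ∨ p = a i + 1) ∧ a i ≠ a (i+1) then G/6 else 0)
      + (if (p = a (i+1) - 1 ∨ p = a (i+1) ∨ p = a (i+1) + 1) ∧ a i ≠ a (i+1) then G/6 else 0) := by
    intro i hi
    have hin : i < n := Finset.mem_range.1 hi
    by_cases hne : a i = a (i+1)
    · rw [if_neg (fun h => h.2 hne), if_neg (fun h => h.2 hne), add_zero, hne,
        intervalIntegral.integral_same]
    · have hlt : a i < a (i+1) := lt_of_le_of_ne (hamono (Nat.le_succ i)) hne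
      have hmid : a i ≤ (a i + a (i+1))/2 := by linarith
      have hmid2 : (a i + a (i+1))/2 ≤ a (i+1) := by linarith
      have hgaple : a (i+1) - a i ≤ G := hgapG i hin
      have hsplit2 : (∫ y in a i..a (i+1), rho x k2 y)
          = (∫ y in a i..((a i + a (i+1))/2), rho x k2 y)
          + (∫ y in ((a i + a (i+1))/2)..(a (i+1)), rho x k2 y) := by
        rw [intervalIntegral.integral_add_adjacent_intervals
          (rho_intInt _ _ _ _) (rho_intInt _ _ _ _)]
      have hL : (∫ y in a i..((a i + a (i+1))/2), rho x k2 y)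
          ≤ if (p = a i - 1 ∨ p = a i ∨ p = a i + 1) ∧ a i ≠ a (i+1) then G/6 else 0 := by
        by_cases hcL : p = a i - 1 ∨ p = a i ∨ p = a i + 1
        · rw [if_pos ⟨hcL, hne⟩]
          calc (∫ y in a i..((a i + a (i+1))/2), rho x k2 y)
              ≤ ∫ _y in a i..((a i + a (i+1))/2), (1:ℝ)/3 :=
                (intervalIntegral.integral_mono_on hmid (rho_intInt _ _ _ _)
                  intervalIntegrable_const (fun y _ => hrho3 y))
          _ = ((a i + a (i+1))/2 - a i) * (1/3) := by
            rw [intervalIntegral.integral_const, smul_eq_mul]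
          _ ≤ G/6 := by linarith
        · rw [if_neg (fun hh => hcL hh.1)]
          refine null_seg x k2 _ _ ((p + a i)/2) ((p + a i + 1)/2) ((p + a i - 1)/2) hmid ?_
          intro y hy1 hy2 he1 he2 he3
          exact rho_zero_L hp2 hp0 hp1' (haval i hin).symm (ha_nonneg i) (ha_le1 (i+1))
            (hsd k2 i hin) hy1 hy2 hcL he1 he2 he3
      have hR : (∫ y in ((a i + a (i+1))/2)..(a (i+1)), rho x k2 y)
          ≤ if (p = a (i+1) - 1 ∨ p = a (i+1) ∨ p = a (i+1) + 1) ∧ a i ≠ a (i+1) then G/6 else 0 := by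
        by_cases hcR : p = a (i+1) - 1 ∨ p = a (i+1) ∨ p = a (i+1) + 1
        · rw [if_pos ⟨hcR, hne⟩]
          calc (∫ y in ((a i + a (i+1))/2)..(a (i+1)), rho x k2 y)
              ≤ ∫ _y in ((a i + a (i+1))/2)..(a (i+1)), (1:ℝ)/3 :=
                (intervalIntegral.integral_mono_on hmid2 (rho_intInt _ _ _ _)
                  intervalIntegrable_const (fun y _ => hrho3 y))
          _ = (a (i+1) - (a i + a (i+1))/2) * (1/3) := by
            rw [intervalIntegral.integral_const, smul_eq_mul]
          _ ≤ G/6 := by linarith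
        · rw [if_neg (fun hh => hcR hh.1)]
          refine null_seg x k2 _ _ ((p + a (i+1))/2) ((p + a (i+1) + 1)/2) ((p + a (i+1) - 1)/2)
            hmid2 ?_
          intro y hy1 hy2 he1 he2 he3
          have hvd : ∃ i', circleDist (x i') y = a (i+1) - y := by
            by_cases hi1 : i + 1 < n
            · refine ⟨⟨i+1, hi1⟩, ?_⟩
              rw [← haval (i+1) hi1]
              have habs : |a (i+1) - y| = a (i+1) - y := abs_of_nonneg (by linarith)
              rw [cd_eq_abs (by
                rw [habs]
                have h1 := ha_le1 (i+1); have h0 := ha_nonneg i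
                linarith), habs]
            · have han1 : a (i+1) = 1 := by simp only [ha]; rw [dif_neg hi1]
              refine ⟨0, ?_⟩
              rw [hx0, han1]
              rw [han1] at hy1 hy2
              have hai0 : 0 ≤ a i := ha_nonneg i
              exact cd_zero (by linarith) (by linarith)
          exact rho_zero_R hp2 hp0 hp1' hvd (ha_nonneg i) (ha_le1 (i+1))
            (hsd k2 i hin) hy1 hy2 hcR he1 he2 he3
      rw [hsplit2]
      exact add_le_add hL hR
  -- at most one piece on each side can be adjacent to p
  have hkeyL : ∀ i j : ℕ, i < j →
      ((p = a i - 1 ∨ p = a i ∨ p = a i + 1) ∧ a i ≠ a (i+1)) →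
      ((p = a j - 1 ∨ p = a j ∨ p = a j + 1) ∧ a j ≠ a (j+1)) → False := by
    rintro i j hij ⟨hci, hnei⟩ ⟨hcj, hnej⟩
    have h1 : a i < a (i+1) := lt_of_le_of_ne (hamono (Nat.le_succ i)) hnei
    have h2 : a (i+1) ≤ a j := hamono hij
    have h3 : a j < a (j+1) := lt_of_le_of_ne (hamono (Nat.le_succ j)) hnej
    obtain ⟨-, hv⟩ := three_set_aux hp0 hp1' (ha_nonneg i) (ha_le1 j) (by linarith) hci hcj
    have hj1 := ha_le1 (j+1)
    linarith
  have hkeyR : ∀ i j : ℕ, i < j →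
      ((p = a (i+1) - 1 ∨ p = a (i+1) ∨ p = a (i+1) + 1) ∧ a i ≠ a (i+1)) →
      ((p = a (j+1) - 1 ∨ p = a (j+1) ∨ p = a (j+1) + 1) ∧ a j ≠ a (j+1)) → False := by
    rintro i j hij ⟨hci, hnei⟩ ⟨hcj, hnej⟩
    have h1 : a i < a (i+1) := lt_of_le_of_ne (hamono (Nat.le_succ i)) hnei
    have h2 : a (i+1) ≤ a j := hamono hij
    have h3 : a j < a (j+1) := lt_of_le_of_ne (hamono (Nat.le_succ j)) hnej
    obtain ⟨hu, -⟩ := three_set_aux hp0 hp1' (ha_nonneg (i+1)) (ha_le1 (j+1)) (by linarith) hci hcj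
    have hi0 := ha_nonneg i
    linarith
  have hsumL : (∑ i ∈ Finset.range n,
      if (p = a i - 1 ∨ p = a i ∨ p = a i + 1) ∧ a i ≠ a (i+1) then G/6 else 0) ≤ G/6 := by
    rw [Finset.sum_ite, Finset.sum_const, Finset.sum_const_zero, add_zero, nsmul_eq_mul]
    have hc1 : (Finset.filter (fun i => (p = a i - 1 ∨ p = a i ∨ p = a i + 1) ∧ a i ≠ a (i+1))
        (Finset.range n)).card ≤ 1 := by
      rw [Finset.card_le_one]
      intro i hi j hj
      rw [Finset.mem_filter] at hi hj
      by_contra hij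
      rcases Nat.lt_or_ge i j with h | h
      · exact hkeyL i j h hi.2 hj.2
      · exact hkeyL j i (lt_of_le_of_ne h (fun e => hij e.symm)) hj.2 hi.2
    have hcast : ((Finset.filter (fun i => (p = a i - 1 ∨ p = a i ∨ p = a i + 1) ∧ a i ≠ a (i+1))
        (Finset.range n)).card : ℝ) ≤ 1 := by exact_mod_cast hc1
    nlinarith [hcast, hGpos]
  have hsumR : (∑ i ∈ Finset.range n,
      if (p = a (i+1) - 1 ∨ p = a (i+1) ∨ p = a (i+1) + 1) ∧ a i ≠ a (i+1) then G/6 else 0)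
      ≤ G/6 := by
    rw [Finset.sum_ite, Finset.sum_const, Finset.sum_const_zero, add_zero, nsmul_eq_mul]
    have hc1 : (Finset.filter
        (fun i => (p = a (i+1) - 1 ∨ p = a (i+1) ∨ p = a (i+1) + 1) ∧ a i ≠ a (i+1))
        (Finset.range n)).card ≤ 1 := by
      rw [Finset.card_le_one]
      intro i hi j hj
      rw [Finset.mem_filter] at hi hj
      by_contra hij
      rcases Nat.lt_or_ge i j with h | h
      · exact hkeyR i j h hi.2 hj.2
      · exact hkeyR j i (lt_of_le_of_ne h (fun e => hij e.symm)) hj.2 hi.2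
    have hcast : ((Finset.filter
        (fun i => (p = a (i+1) - 1 ∨ p = a (i+1) ∨ p = a (i+1) + 1) ∧ a i ≠ a (i+1))
        (Finset.range n)).card : ℝ) ≤ 1 := by exact_mod_cast hc1
    nlinarith [hcast, hGpos]
  -- upper bound for profit
  have hprofit_le : profit k2 x ≤ G/3 := by
    have hadj : (∑ i ∈ Finset.range n, ∫ y in a i..a (i+1), rho x k2 y)
        = ∫ y in (a 0)..(a n), rho x k2 y :=
      intervalIntegral.sum_integral_adjacent_intervals (fun i _ => rho_intInt _ _ _ _)
    have hPr : profit k2 x = ∑ i ∈ Finset.range n, ∫ y in a i..a (i+1), rho x k2 y := by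
      rw [hadj, ha0, han]
      rfl
    rw [hPr]
    calc (∑ i ∈ Finset.range n, ∫ y in a i..a (i+1), rho x k2 y)
        ≤ ∑ i ∈ Finset.range n,
          ((if (p = a i - 1 ∨ p = a i ∨ p = a i + 1) ∧ a i ≠ a (i+1) then G/6 else 0)
          + (if (p = a (i+1) - 1 ∨ p = a (i+1) ∨ p = a (i+1) + 1) ∧ a i ≠ a (i+1) then G/6 else 0)) :=
        (Finset.sum_le_sum hpiece)
    _ = (∑ i ∈ Finset.range n,
          if (p = a i - 1 ∨ p = a i ∨ p = a i + 1) ∧ a i ≠ a (i+1) then G/6 else 0)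
        + (∑ i ∈ Finset.range n,
          if (p = a (i+1) - 1 ∨ p = a (i+1) ∨ p = a (i+1) + 1) ∧ a i ≠ a (i+1) then G/6 else 0) :=
        Finset.sum_add_distrib
    _ ≤ G/6 + G/6 := add_le_add hsumL hsumR
    _ = G/3 := by ring
  -- deviation lower bound
  have hdevside : ∀ i, x i ≤ a i₀ ∨ a (i₀+1) ≤ x i := fun i => hsd i i₀ hi₀n
  have hdev := deviation_lb x k2 (a i₀) (a (i₀+1)) hx_nonneg hx1 (ha_nonneg i₀) (ha_le1 (i₀+1))
    (by linarith) hdevside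
  have hEq := heq k2 ((a i₀ + a (i₀+1))/2)
    ⟨by have h1 := ha_nonneg i₀; have h2 := ha_nonneg (i₀+1); linarith,
     by have h1 := ha_le1 i₀; have h2 := ha_le1 (i₀+1); linarith⟩
  linarith
end
end

section
/- Suppose a vendor k moves to a point in the interior of a gap (x_l, x_{l+1}) between two consecutive other vendors (with x_l < x_{l+1}, l ≠ k-1, k). Then vendor k's new profit equals half the length of that gap: f_k(x_k → (x_l, x_{l+1})) = |I_l|/2. -/
noncomputable section

open scoped Classical

lemma circleDist_eq' {u v : ℝ} (h : |u - v| ≤ 1) :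
    circleDist u v = min |u - v| (1 - |u - v|) := by
  unfold circleDist
  rcases abs_cases (u - v) with ⟨e, hs⟩ | ⟨e, hs⟩ <;> rw [e] at h ⊢ <;>
    rw [abs_of_nonneg (by linarith : (0:ℝ) ≤ u - v + 1),
        abs_of_nonpos (by linarith : u - v - 1 ≤ 0)] <;>
    rcases le_total (u - v) (1 - (u-v)) with h' | h' <;>
    · rcases le_total (u-v+1) (u-v) with h'' | h'' <;>
      simp only [min_def] <;> split_ifs <;> linarith

theorem profit_move_into_gap {n : ℕ} [NeZero n] (hn : 2 ≤ n) (x : Fin n → ℝ)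
    (hx0 : x 0 = 0) (hmono : Monotone x) (hx1 : ∀ j, x j ≤ 1)
    (k l : Fin n) (hlk : l ≠ k) (hlk' : l ≠ k - 1)
    (x' : ℝ) (hx'l : x l < x') (hx'r : x' < nextVal x l) :
    profit k (Function.update x k x') = gap x l / 2 := by
  set ξ := Function.update x k x' with hξ
  set a := x l with ha
  set b := nextVal x l with hb
  have hl1k : l + 1 ≠ k := by
    intro h; exact hlk' (by rw [← h]; exact (add_sub_cancel_right l 1).symm)
  have hzero : ∀ j : Fin n, x 0 ≤ x j := fun j => hmono (by simp [Fin.le_def])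
  have ha0 : 0 ≤ a := hx0 ▸ hzero l
  have h1 : ((1 : Fin n) : ℕ) = 1 := by
    rw [Fin.val_one']; exact Nat.mod_eq_of_lt (by omega)
  have hval : ((l + 1 : Fin n) : ℕ) = ((l : ℕ) + 1) % n := by
    rw [Fin.val_add, h1]
  have hb1 : b ≤ 1 := by
    rw [hb, nextVal]
    split_ifs with hw
    · have h0 : (l + 1 : Fin n) = 0 := by
        apply Fin.ext
        rw [hval, hw, Nat.mod_self, Fin.val_zero]
      rw [h0, hx0]; norm_num
    · simpa using hx1 (l + 1)
  -- all other vendors are outside the open gap (a, b)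
  have hsep : ∀ j : Fin n, x j ≤ a ∨ b ≤ x j := by
    intro j
    by_cases hw : (l : ℕ) + 1 = n
    · left
      exact hmono (by rw [Fin.le_def]; omega)
    · rcases le_or_gt j l with hjl | hjl
      · exact Or.inl (hmono hjl)
      · right
        have hv : ((l + 1 : Fin n) : ℕ) = (l : ℕ) + 1 := by
          rw [hval]; exact Nat.mod_eq_of_lt (by have := l.isLt; omega)
        have hle : (l + 1 : Fin n) ≤ j := by rw [Fin.le_def, hv]; exact hjl
        rw [hb, nextVal, if_neg hw, zero_add]
        exact hmono hle
  set m1 := (a + x') / 2 with hm1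
  set m2 := (x' + b) / 2 with hm2
  have hx'0 : 0 < x' := lt_of_le_of_lt ha0 hx'l
  have hx'1 : x' < 1 := lt_of_lt_of_le hx'r hb1
  have hj01 : ∀ j : Fin n, 0 ≤ x j ∧ x j ≤ 1 := fun j => ⟨hx0 ▸ hzero j, hx1 j⟩
  -- key inequality 1 : inside (m1, m2), x' is strictly closest
  have key1 : ∀ y, m1 < y → y < m2 → ∀ z, 0 ≤ z → z ≤ 1 → (z ≤ a ∨ b ≤ z) →
      circleDist x' y < circleDist z y := by
    intro y hy1 hy2 z hz0 hz1 hz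
    have hy0 : 0 < y := by rcases hz with h|h <;> simp only [hm1] at hy1 <;> linarith
    have hyle : y < 1 := by simp only [hm2] at hy2; linarith
    rw [circleDist_eq' (abs_le.mpr ⟨by linarith, by linarith⟩),
        circleDist_eq' (abs_le.mpr ⟨by linarith, by linarith⟩), lt_min_iff]
    simp only [hm1] at hy1
    simp only [hm2] at hy2
    rcases abs_cases (x' - y) with ⟨e1, f1⟩ | ⟨e1, f1⟩ <;>
      rcases abs_cases (z - y) with ⟨e2, f2⟩ | ⟨e2, f2⟩ <;>
      rw [e1, e2] <;>
      constructor <;>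
      rw [min_lt_iff] <;>
      rcases hz with hz | hz <;>
      first
        | exact Or.inl (by linarith)
        | exact Or.inr (by linarith)
  -- key inequality 2 : outside [m1, m2], some fixed vendor beats x'
  have key2 : ∀ y, 0 ≤ y → y ≤ 1 → (y < m1 ∨ m2 < y) →
      (circleDist a y < circleDist x' y ∨ circleDist b y < circleDist x' y) := by
    intro y hy0 hy1 hcase
    have hra : |a - y| ≤ 1 := abs_le.mpr ⟨by linarith, by linarith⟩
    have hrb : |b - y| ≤ 1 := abs_le.mpr ⟨by linarith, by linarith⟩
    have hrx : |x' - y| ≤ 1 := abs_le.mpr ⟨by linarith, by linarith⟩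
    rcases hcase with hy | hy
    · simp only [hm1] at hy
      rcases le_or_gt ((a + b - 1) / 2) y with hw | hw
      · left
        rw [circleDist_eq' hra, circleDist_eq' hrx, lt_min_iff]
        rcases abs_cases (a - y) with ⟨e1, f1⟩ | ⟨e1, f1⟩ <;>
          rcases abs_cases (x' - y) with ⟨e2, f2⟩ | ⟨e2, f2⟩ <;>
          rw [e1, e2] <;>
          constructor <;> rw [min_lt_iff] <;>
          first
            | exact Or.inl (by linarith)
            | exact Or.inr (by linarith)
      · right
        rw [circleDist_eq' hrb, circleDist_eq' hrx, lt_min_iff]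
        rcases abs_cases (b - y) with ⟨e1, f1⟩ | ⟨e1, f1⟩ <;>
          rcases abs_cases (x' - y) with ⟨e2, f2⟩ | ⟨e2, f2⟩ <;>
          rw [e1, e2] <;>
          constructor <;> rw [min_lt_iff] <;>
          first
            | exact Or.inl (by linarith)
            | exact Or.inr (by linarith)
    · simp only [hm2] at hy
      rcases le_or_gt y ((a + b + 1) / 2) with hw | hw
      · right
        rw [circleDist_eq' hrb, circleDist_eq' hrx, lt_min_iff]
        rcases abs_cases (b - y) with ⟨e1, f1⟩ | ⟨e1, f1⟩ <;>
          rcases abs_cases (x' - y) with ⟨e2, f2⟩ | ⟨e2, f2⟩ <;>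
          rw [e1, e2] <;>
          constructor <;> rw [min_lt_iff] <;>
          first
            | exact Or.inl (by linarith)
            | exact Or.inr (by linarith)
      · left
        rw [circleDist_eq' hra, circleDist_eq' hrx, lt_min_iff]
        rcases abs_cases (a - y) with ⟨e1, f1⟩ | ⟨e1, f1⟩ <;>
          rcases abs_cases (x' - y) with ⟨e2, f2⟩ | ⟨e2, f2⟩ <;>
          rw [e1, e2] <;>
          constructor <;> rw [min_lt_iff] <;>
          first
            | exact Or.inl (by linarith)
            | exact Or.inr (by linarith)
  -- nearest set inside the gap
  have hnear : ∀ y, m1 < y → y < m2 → nearest ξ y = {k} := by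
    intro y hy1 hy2
    have hkm : k ∈ nearest ξ y := by
      simp only [nearest, Finset.mem_filter, Finset.mem_univ, true_and]
      intro i
      by_cases hik : i = k
      · subst hik; exact le_refl _
      · have hxi := hj01 i
        rw [hξ, Function.update_self, Function.update_of_ne hik]
        exact le_of_lt (key1 y hy1 hy2 (x i) hxi.1 hxi.2 (hsep i))
    apply Finset.eq_singleton_iff_unique_mem.mpr
    refine ⟨hkm, ?_⟩
    intro j hj
    by_contra hjk
    simp only [nearest, Finset.mem_filter, Finset.mem_univ, true_and] at hj
    have := hj k
    rw [hξ, Function.update_self, Function.update_of_ne hjk] at this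
    have hxj := hj01 j
    exact absurd this (not_le.mpr (key1 y hy1 hy2 (x j) hxj.1 hxj.2 (hsep j)))
  -- k is not nearest outside [m1, m2]
  have hfar : ∀ y, 0 ≤ y → y ≤ 1 → (y < m1 ∨ m2 < y) → k ∉ nearest ξ y := by
    intro y hy0 hy1 hcase hk
    simp only [nearest, Finset.mem_filter, Finset.mem_univ, true_and] at hk
    rcases key2 y hy0 hy1 hcase with h | h
    · have := hk l
      rw [hξ, Function.update_self, Function.update_of_ne hlk] at this
      exact absurd this (not_le.mpr h)
    · have := hk (l + 1)
      rw [hξ, Function.update_self, Function.update_of_ne hl1k] at this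
      -- x (l+1) equals b or b - 1 (wrap); circleDist agrees
      have hcd : circleDist (x (l + 1)) y = circleDist b y := by
        rw [hb, nextVal]
        split_ifs with hw
        · have h0 : (l + 1 : Fin n) = 0 := by
            apply Fin.ext
            rw [hval, hw, Nat.mod_self, Fin.val_zero]
          rw [h0, hx0]
          rw [circleDist_eq' (by rw [zero_sub, abs_neg, abs_of_nonneg hy0]; exact hy1),
              circleDist_eq' (abs_le.mpr ⟨by linarith, by linarith⟩)]
          rw [zero_sub, abs_neg, abs_of_nonneg hy0]
          have : |1 + 0 - y| = 1 - y := by rw [abs_of_nonneg (by linarith)]; ring_nf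
          rw [this]
          rw [min_comm]
          ring_nf
        · rw [zero_add]
      rw [hcd] at this
      exact absurd this (not_le.mpr h)
  have hm1pos : 0 < m1 := by rw [hm1]; linarith
  have hm2lt : m2 < 1 := by rw [hm2]; linarith
  have hm12 : m1 < m2 := by rw [hm1, hm2]; linarith
  -- rho equals the indicator a.e.
  set g : ℝ → ℝ := (Set.Ioo m1 m2).indicator (fun _ => (1:ℝ)) with hg
  have hae : ∀ᵐ y ∂(MeasureTheory.volume), y ∈ Set.uIoc (0:ℝ) 1 → rho ξ k y = g y := by
    have hz : (MeasureTheory.volume : MeasureTheory.Measure ℝ) {m1, m2} = 0 :=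
      (Set.Countable.insert m1 (Set.countable_singleton m2)).measure_zero _
    filter_upwards [MeasureTheory.measure_eq_zero_iff_ae_notMem.mp hz] with y hy hy01
    rw [Set.uIoc_of_le (by norm_num : (0:ℝ) ≤ 1)] at hy01
    simp only [Set.mem_insert_iff, Set.mem_singleton_iff, not_or] at hy
    rcases lt_trichotomy y m1 with h1 | h1 | h1
    · rw [hg, Set.indicator_of_notMem (by intro h; exact absurd (Set.mem_Ioo.mp h).1 (not_lt.mpr h1.le))]
      rw [rho, if_neg (hfar y hy01.1.le hy01.2 (Or.inl h1))]
    · exact absurd h1 hy.1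
    · rcases lt_trichotomy y m2 with h2 | h2 | h2
      · rw [hg, Set.indicator_of_mem (Set.mem_Ioo.mpr ⟨h1, h2⟩)]
        rw [rho, hnear y h1 h2]
        simp
      · exact absurd h2 hy.2
      · rw [hg, Set.indicator_of_notMem (by intro h; exact absurd (Set.mem_Ioo.mp h).2 (not_lt.mpr h2.le))]
        rw [rho, if_neg (hfar y hy01.1.le hy01.2 (Or.inr h2))]
  have hgap : gap x l = b - a := by rw [hb, ha]; unfold gap nextVal; ring
  rw [profit]
  rw [intervalIntegral.integral_congr_ae hae]
  rw [intervalIntegral.integral_of_le (by norm_num : (0:ℝ) ≤ 1)]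
  rw [hg, MeasureTheory.setIntegral_indicator measurableSet_Ioo]
  have hss : Set.Ioc (0:ℝ) 1 ∩ Set.Ioo m1 m2 = Set.Ioo m1 m2 := by
    apply Set.inter_eq_right.mpr
    intro y hy
    exact ⟨lt_trans hm1pos hy.1, le_of_lt (lt_trans hy.2 hm2lt)⟩
  rw [hss, MeasureTheory.setIntegral_const, MeasureTheory.measureReal_def, Real.volume_Ioo,
      ENNReal.toReal_ofReal (by linarith), smul_eq_mul, mul_one, hgap, hm2, hm1]
  ring
end
end

section
/- A location x = (x_1,…,x_n) with 0 = x_1 ≤ x_2 ≤ … ≤ x_n of n ≥ 2 vendors on the circle of circumference 1 is an equilibrium if and only if |I_k| + |I_{k+1}| ≥ |Ī| holds for every 1 ≤ k ≤ n, where I_j = [x_j, x_{j+1}] (indices cyclic) and |Ī| = max_{1≤l≤n} |I_l|. -/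
noncomputable section

open scoped Classical

namespace HT
open MeasureTheory Set

lemma cd_formula {u y : ℝ} (h : |u - y| ≤ 1) :
    circleDist u y = min |u - y| (1 - |u - y|) := by
  have h' := abs_le.mp h
  unfold circleDist
  rcases abs_cases (u - y) with ⟨h1, h2⟩ | ⟨h1, h2⟩ <;>
    rcases abs_cases (u - y + 1) with ⟨h3, h4⟩ | ⟨h3, h4⟩ <;>
      rcases abs_cases (u - y - 1) with ⟨h5, h6⟩ | ⟨h5, h6⟩ <;>
        simp only [min_def] <;> split_ifs <;> linarith

lemma F_shift {s : ℝ} (h0 : 0 ≤ s) (h1 : s ≤ 1) :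
    min |s - 1| (1 - |s - 1|) = min |s| (1 - |s|) := by
  rw [abs_of_nonpos (by linarith), abs_of_nonneg h0]
  rw [min_comm]
  ring_nf

lemma nearest_nonempty {n : ℕ} [NeZero n] (ξ : Fin n → ℝ) (y : ℝ) :
    (nearest ξ y).Nonempty := by
  obtain ⟨j, -, hj⟩ := Finset.exists_min_image Finset.univ
    (fun i => circleDist (ξ i) y) ⟨0, Finset.mem_univ _⟩
  exact ⟨j, Finset.mem_filter.mpr ⟨Finset.mem_univ _, fun i => hj i (Finset.mem_univ _)⟩⟩

lemma rho_nonneg {n : ℕ} (ξ : Fin n → ℝ) (k : Fin n) (y : ℝ) : 0 ≤ rho ξ k y := by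
  unfold rho; split_ifs with h
  · positivity
  · exact le_refl 0

lemma rho_le_one {n : ℕ} (ξ : Fin n → ℝ) (k : Fin n) (y : ℝ) : rho ξ k y ≤ 1 := by
  unfold rho; split_ifs with h
  · rw [div_le_one (by exact_mod_cast Finset.card_pos.mpr ⟨k, h⟩)]
    exact_mod_cast Finset.card_pos.mpr ⟨k, h⟩
  · linarith

lemma measurable_circleDist (u : ℝ) : Continuous (fun y => circleDist u y) := by
  unfold circleDist; fun_prop

lemma measurableSet_mem_nearest {n : ℕ} (ξ : Fin n → ℝ) (j : Fin n) :
    MeasurableSet {y : ℝ | j ∈ nearest ξ y} := by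
  have : {y : ℝ | j ∈ nearest ξ y} =
      ⋂ i, {y | circleDist (ξ j) y ≤ circleDist (ξ i) y} := by
    ext y; simp [nearest]
  rw [this]
  exact MeasurableSet.iInter fun i =>
    measurableSet_le (measurable_circleDist _).measurable (measurable_circleDist _).measurable

lemma measurableSet_nearest_eq {n : ℕ} (ξ : Fin n → ℝ) (s : Finset (Fin n)) :
    MeasurableSet {y : ℝ | nearest ξ y = s} := by
  have : {y : ℝ | nearest ξ y = s} =
      ⋂ j, (if j ∈ s then {y | j ∈ nearest ξ y} else {y | j ∈ nearest ξ y}ᶜ) := by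
    ext y
    simp only [Set.mem_setOf_eq, Set.mem_iInter]
    constructor
    · intro hys j
      split_ifs with hj
      · show j ∈ nearest ξ y
        rw [hys]; exact hj
      · simp only [Set.mem_compl_iff, Set.mem_setOf_eq]
        rw [hys]; exact hj
    · intro h
      apply Finset.ext
      intro j
      have hj := h j
      by_cases hjs : j ∈ s
      · rw [if_pos hjs] at hj
        exact ⟨fun _ => hjs, fun _ => hj⟩
      · rw [if_neg hjs] at hj
        simp only [Set.mem_compl_iff, Set.mem_setOf_eq] at hj
        exact ⟨fun hc => absurd hc hj, fun hc => absurd hc hjs⟩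
  rw [this]
  refine MeasurableSet.iInter fun j => ?_
  split_ifs
  · exact measurableSet_mem_nearest ξ j
  · exact (measurableSet_mem_nearest ξ j).compl

lemma measurable_rho {n : ℕ} (ξ : Fin n → ℝ) (k : Fin n) :
    Measurable (fun y => rho ξ k y) := by
  have hrep : (fun y => rho ξ k y) = fun y => ∑ s : Finset (Fin n),
      if nearest ξ y = s then (if k ∈ s then (1:ℝ)/s.card else 0) else 0 := by
    funext y
    rw [Finset.sum_ite_eq Finset.univ (nearest ξ y)
      (fun s => if k ∈ s then (1:ℝ)/s.card else 0)]
    simp [rho]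
  rw [hrep]
  refine Finset.measurable_sum _ fun s _ => ?_
  exact Measurable.ite (measurableSet_nearest_eq ξ s) measurable_const measurable_const

lemma intervalIntegrable_of_bdd {f : ℝ → ℝ} (hm : Measurable f) (C : ℝ)
    (h : ∀ y, |f y| ≤ C) (a b : ℝ) : IntervalIntegrable f volume a b := by
  constructor <;>
  · refine MeasureTheory.Integrable.mono' (g := fun _ => C)
      (MeasureTheory.integrableOn_const measure_Ioc_lt_top.ne)
      hm.aestronglyMeasurable ?_
    filter_upwards with y using by simpa [Real.norm_eq_abs] using h y

lemma intervalIntegrable_rho {n : ℕ} (ξ : Fin n → ℝ) (k : Fin n) (a b : ℝ) :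
    IntervalIntegrable (fun y => rho ξ k y) volume a b :=
  intervalIntegrable_of_bdd (measurable_rho ξ k) 1
    (fun y => abs_le.mpr ⟨by linarith [rho_nonneg ξ k y], rho_le_one ξ k y⟩) a b

lemma integral_indicator_Ioc (A B c : ℝ) :
    ∫ y in (0:ℝ)..1, (Set.Ioc A B).indicator (fun _ => c) y
      = c * max (min B 1 - max A 0) 0 := by
  rw [intervalIntegral.integral_of_le zero_le_one,
    MeasureTheory.setIntegral_indicator measurableSet_Ioc,
    MeasureTheory.setIntegral_const, Set.Ioc_inter_Ioc, measureReal_def, Real.volume_Ioc]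

  rw [min_comm B 1, max_comm A 0]
  rcases le_total (min 1 B - max 0 A) 0 with h | h
  · rw [ENNReal.ofReal_of_nonpos h]
    simp only [ENNReal.toReal_zero, zero_smul]
    rw [max_eq_right h]
    ring
  · rw [ENNReal.toReal_ofReal h, smul_eq_mul, max_eq_left h]
    ring

lemma ae_restrict_off_finite (t : Set ℝ) {s : Set ℝ} (hs : s.Finite) {P : ℝ → Prop}
    (h : ∀ y, y ∉ s → P y) : ∀ᵐ y ∂(volume.restrict t), P y := by
  rw [MeasureTheory.ae_iff]
  have h1 : {y | ¬ P y} ⊆ s := fun y hy => by by_contra hc; exact hy (h y hc)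
  have h2 : volume.restrict t {a | ¬ P a} ≤ volume s :=
    le_trans (MeasureTheory.Measure.restrict_apply_le _ _) (measure_mono h1)
  rw [hs.measure_zero volume] at h2
  exact le_antisymm h2 zero_le



open MeasureTheory Set

lemma in_lt {ra rb t d s : ℝ} (hra : 0 < ra) (hrb : 0 < rb) (hra1 : ra ≤ 1) (hrb1 : rb ≤ 1)
    (ht1 : -ra/2 < t) (ht2 : t < rb/2) (hd1 : rb ≤ d) (hd2 : d ≤ 1 - ra)
    (hs : |s| ≤ 1)
    (hcase : s = d - t ∨ s = d - t - 1 ∨ s = d - t + 1 ∨ s = d - t - 2 ∨ s = d - t + 2) :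
    min |t| (1 - |t|) < min |s| (1 - |s|) := by
  have hdt1 : 0 < d - t := by linarith
  have hdt2 : d - t < 1 := by linarith
  have hs' := abs_le.mp hs
  have e1 : min |t| (1 - |t|) = |t| :=
    min_eq_left (by rcases abs_cases t with ⟨h, h2⟩ | ⟨h, h2⟩ <;> linarith)
  rw [e1]
  rcases abs_cases s with ⟨h, h2⟩ | ⟨h, h2⟩ <;>
    refine lt_min ?_ ?_ <;>
      rcases abs_cases t with ⟨h3, h4⟩ | ⟨h3, h4⟩ <;>
        rcases hcase with rfl | rfl | rfl | rfl | rfl <;> linarith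

lemma out_b {rb t s : ℝ} (hrb : 0 < rb) (hrb1 : rb < 1) (h2 : rb < 2*t) (ht1 : t < 1)
    (hs : |s| ≤ 1) (hcase : s = rb - t - 1 ∨ s = rb - t ∨ s = rb - t + 1) :
    min |s| (1 - |s|) < t := by
  have m1 := min_le_left |s| (1 - |s|)
  have m2 := min_le_right |s| (1 - |s|)
  have hs' := abs_le.mp hs
  rcases abs_cases s with ⟨h, hx⟩ | ⟨h, hx⟩ <;> rcases hcase with rfl | rfl | rfl <;> linarith

lemma out_a {ra t s : ℝ} (hra : 0 < ra) (hra1 : ra < 1) (h2 : ra < 2*(1-t)) (ht0 : 0 < t)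
    (ht1 : t < 1) (hs : |s| ≤ 1)
    (hcase : s = -ra - t - 1 ∨ s = -ra - t ∨ s = -ra - t + 1 ∨ s = -ra - t + 2) :
    min |s| (1 - |s|) < 1 - t := by
  have m1 := min_le_left |s| (1 - |s|)
  have m2 := min_le_right |s| (1 - |s|)
  have hs' := abs_le.mp hs
  rcases abs_cases s with ⟨h, hx⟩ | ⟨h, hx⟩ <;> rcases hcase with rfl | rfl | rfl | rfl <;> linarith

lemma region_measure {p ra rb : ℝ} (hp0 : 0 ≤ p) (hp1 : p ≤ 1) (hra : 0 < ra) (hra1 : ra ≤ 1)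
    (hrb : 0 < rb) (hrb1 : rb ≤ 1) :
    max (min (p + rb/2) 1 - max (p - ra/2) 0) 0
    + max (min (p + rb/2 + 1) 1 - max (p - ra/2 + 1) 0) 0
    + max (min (p + rb/2 - 1) 1 - max (p - ra/2 - 1) 0) 0 = (ra + rb)/2 := by
  rcases lt_or_ge (p - ra/2) 0 with h | h
  · have hc1 : p + rb/2 ≤ 1 := by linarith
    rw [min_eq_left hc1, max_eq_right h.le,
        min_eq_right (by linarith : (1:ℝ) ≤ p + rb/2 + 1),
        max_eq_left (by linarith : (0:ℝ) ≤ p - ra/2 + 1),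
        min_eq_left (by linarith : p + rb/2 - 1 ≤ 1),
        max_eq_right (by linarith : p - ra/2 - 1 ≤ 0),
        max_eq_left (by linarith : (0:ℝ) ≤ p + rb/2 - 0),
        max_eq_left (by linarith : (0:ℝ) ≤ 1 - (p - ra/2 + 1)),
        max_eq_right (by linarith : p + rb/2 - 1 - 0 ≤ 0)]
    ring
  · rcases le_or_gt (p + rb/2) 1 with h' | h'
    · rw [min_eq_left h', max_eq_left h,
          min_eq_right (by linarith : (1:ℝ) ≤ p + rb/2 + 1),
          max_eq_left (by linarith : (0:ℝ) ≤ p - ra/2 + 1),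
          min_eq_left (by linarith : p + rb/2 - 1 ≤ 1),
          max_eq_right (by linarith : p - ra/2 - 1 ≤ 0),
          max_eq_left (by linarith : (0:ℝ) ≤ p + rb/2 - (p - ra/2)),
          max_eq_right (by linarith : 1 - (p - ra/2 + 1) ≤ 0),
          max_eq_right (by linarith : p + rb/2 - 1 - 0 ≤ 0)]
      ring
    · rw [min_eq_right h'.le, max_eq_left h,
          min_eq_right (by linarith : (1:ℝ) ≤ p + rb/2 + 1),
          max_eq_left (by linarith : (0:ℝ) ≤ p - ra/2 + 1),
          min_eq_left (by linarith : p + rb/2 - 1 ≤ 1),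
          max_eq_right (by linarith : p - ra/2 - 1 ≤ 0),
          max_eq_left (by linarith : (0:ℝ) ≤ 1 - (p - ra/2)),
          max_eq_right (by linarith : 1 - (p - ra/2 + 1) ≤ 0),
          max_eq_left (by linarith : (0:ℝ) ≤ p + rb/2 - 1 - 0)]
      ring

def ceq (u v : ℝ) : Prop := u = v ∨ u = v + 1 ∨ u = v - 1

lemma ceq_refl (u : ℝ) : ceq u u := Or.inl rfl

lemma ceq_symm {u v : ℝ} (h : ceq u v) : ceq v u := by
  rcases h with h | h | h
  · exact Or.inl h.symm
  · exact Or.inr (Or.inr (by linarith))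
  · exact Or.inr (Or.inl (by linarith))

lemma ceq_trans' {u v w : ℝ} (hu : u ∈ Icc (0:ℝ) 1) (hv : v ∈ Icc (0:ℝ) 1)
    (hw : w ∈ Icc (0:ℝ) 1) (h1 : ceq u v) (h2 : ceq v w) : ceq u w := by
  obtain ⟨hu0, hu1⟩ := hu; obtain ⟨hv0, hv1⟩ := hv; obtain ⟨hw0, hw1⟩ := hw
  rcases h1 with h1 | h1 | h1 <;> rcases h2 with h2 | h2 | h2 <;>
    first
      | exact Or.inl (by linarith)
      | exact Or.inr (Or.inl (by linarith))
      | exact Or.inr (Or.inr (by linarith))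

lemma cd_ceq {u v y : ℝ} (hu : u ∈ Icc (0:ℝ) 1) (hv : v ∈ Icc (0:ℝ) 1)
    (hy : y ∈ Icc (0:ℝ) 1) (h : ceq u v) : circleDist u y = circleDist v y := by
  obtain ⟨hu0, hu1⟩ := hu; obtain ⟨hv0, hv1⟩ := hv; obtain ⟨hy0, hy1⟩ := hy
  rcases h with h | h | h
  · rw [h]
  · -- u = v + 1, so v = 0, u = 1
    have hv0' : v = 0 := by linarith
    have hu' : u = 1 := by rw [h, hv0']; ring
    rw [cd_formula (by rw [hu']; rw [abs_le]; constructor <;> linarith),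
        cd_formula (by rw [hv0']; rw [abs_le]; constructor <;> linarith)]
    have : v - y = (u - y) - 1 := by rw [h]; ring
    rw [this]
    exact (F_shift (by rw [hu']; linarith) (by rw [hu']; linarith)).symm
  · have hv1' : v = 1 := by linarith
    have hu' : u = 0 := by rw [h, hv1']; ring
    rw [cd_formula (by rw [hu']; rw [abs_le]; constructor <;> linarith),
        cd_formula (by rw [hv1']; rw [abs_le]; constructor <;> linarith)]
    have : u - y = (v - y) - 1 := by rw [h]; ring
    rw [this]
    exact F_shift (by rw [hv1']; linarith) (by rw [hv1']; linarith)

lemma tau_exists {p y : ℝ} (hp : p ∈ Icc (0:ℝ) 1) (hy : y ∈ Icc (0:ℝ) 1) :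
    ∃ τ, 0 ≤ τ ∧ τ ≤ 1 ∧ (y - p = τ ∨ y - p = τ - 1) ∧ circleDist p y = min τ (1 - τ) := by
  obtain ⟨hp0, hp1⟩ := hp; obtain ⟨hy0, hy1⟩ := hy
  have hf := cd_formula (u := p) (y := y) (abs_le.mpr ⟨by linarith, by linarith⟩)
  rcases le_total p y with hc | hc
  · refine ⟨y - p, by linarith, by linarith, Or.inl rfl, ?_⟩
    rw [hf, abs_of_nonpos (by linarith : p - y ≤ 0)]
    have e1 : -(p - y) = y - p := by ring
    rw [e1]
  · refine ⟨y - p + 1, by linarith, by linarith, Or.inr (by ring), ?_⟩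
    rw [hf, abs_of_nonneg (by linarith : 0 ≤ p - y), min_comm]
    congr 1 <;> ring


lemma cd_rep {p y t : ℝ} (hp : p ∈ Icc (0:ℝ) 1) (hy : y ∈ Icc (0:ℝ) 1)
    (ht : y - p = t ∨ y - p = t - 1 ∨ y - p = t + 1) (htl : -1 < t) (htu : t < 1) :
    circleDist p y = min |t| (1 - |t|) := by
  obtain ⟨hp0, hp1⟩ := hp; obtain ⟨hy0, hy1⟩ := hy
  have hf := cd_formula (u := p) (y := y) (abs_le.mpr ⟨by linarith, by linarith⟩)
  rcases ht with h | h | h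
  · rw [hf, show p - y = -t from by linarith, abs_neg]
  · have ht0 : 0 ≤ t := by linarith
    rw [hf, show p - y = 1 - t from by linarith, abs_of_nonneg (by linarith),
      abs_of_nonneg ht0, min_comm]
    congr 1 <;> ring
  · have ht0 : t ≤ 0 := by linarith
    rw [hf, show p - y = -(t+1) from by linarith, abs_neg,
      abs_of_nonneg (by linarith : (0:ℝ) ≤ t + 1), abs_of_nonpos ht0, min_comm]
    congr 1 <;> ring

lemma rep5 {a b d t : ℝ} (ha : a = d ∨ a = d - 1) (hb : b = t ∨ b = t - 1 ∨ b = t + 1) :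
    a - b = d - t ∨ a - b = d - t - 1 ∨ a - b = d - t + 1 ∨ a - b = d - t - 2 ∨
      a - b = d - t + 2 := by
  rcases ha with h | h <;> rcases hb with h' | h' | h'
  · exact Or.inl (by linarith)
  · exact Or.inr (Or.inr (Or.inl (by linarith)))
  · exact Or.inr (Or.inl (by linarith))
  · exact Or.inr (Or.inl (by linarith))
  · exact Or.inl (by linarith)
  · exact Or.inr (Or.inr (Or.inr (Or.inl (by linarith))))

def cls {n : ℕ} (ξ : Fin n → ℝ) (k : Fin n) : Finset (Fin n) :=
  Finset.univ.filter fun i => ceq (ξ i) (ξ k)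

lemma mem_cls_self {n : ℕ} (ξ : Fin n → ℝ) (k : Fin n) : k ∈ cls ξ k :=
  Finset.mem_filter.mpr ⟨Finset.mem_univ _, ceq_refl _⟩

def gfun (cl cr c : ℝ) : ℝ → ℝ := fun y =>
  (Set.Ioc cl cr).indicator (fun _ => c) y + (Set.Ioc (cl+1) (cr+1)).indicator (fun _ => c) y
  + (Set.Ioc (cl-1) (cr-1)).indicator (fun _ => c) y

lemma II_ind (A B c : ℝ) :
    IntervalIntegrable (fun y => (Set.Ioc A B).indicator (fun _ => c) y) volume 0 1 := by
  apply intervalIntegrable_of_bdd (C := |c|)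
  · exact measurable_const.indicator measurableSet_Ioc
  · intro y
    rw [Set.indicator_apply]
    split_ifs
    · exact le_refl _
    · simp [abs_nonneg]

lemma gfun_eq_c {cl cr c y : ℝ} (h1 : cr - cl ≤ 1)
    (hy : y ∈ Ioc cl cr ∨ y ∈ Ioc (cl+1) (cr+1) ∨ y ∈ Ioc (cl-1) (cr-1)) :
    gfun cl cr c y = c := by
  unfold gfun
  rcases hy with h | h | h
  · obtain ⟨ha, hb⟩ := h
    rw [Set.indicator_of_mem (Set.mem_Ioc.mpr ⟨ha, hb⟩),
      Set.indicator_of_notMem (by rw [Set.mem_Ioc]; push_neg; intro hgt; linarith),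
      Set.indicator_of_notMem (by rw [Set.mem_Ioc]; push_neg; intro hgt; linarith)]
    ring
  · obtain ⟨ha, hb⟩ := h
    rw [Set.indicator_of_notMem (by rw [Set.mem_Ioc]; push_neg; intro hgt; linarith),
      Set.indicator_of_mem (Set.mem_Ioc.mpr ⟨ha, hb⟩),
      Set.indicator_of_notMem (by rw [Set.mem_Ioc]; push_neg; intro hgt; linarith)]
    ring
  · obtain ⟨ha, hb⟩ := h
    rw [Set.indicator_of_notMem (by rw [Set.mem_Ioc]; push_neg; intro hgt; linarith),
      Set.indicator_of_notMem (by rw [Set.mem_Ioc]; push_neg; intro hgt; linarith),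
      Set.indicator_of_mem (Set.mem_Ioc.mpr ⟨ha, hb⟩)]
    ring

lemma gfun_eq_zero {cl cr c y : ℝ}
    (hy : ¬(y ∈ Ioc cl cr ∨ y ∈ Ioc (cl+1) (cr+1) ∨ y ∈ Ioc (cl-1) (cr-1))) :
    gfun cl cr c y = 0 := by
  push_neg at hy
  unfold gfun
  rw [Set.indicator_of_notMem hy.1, Set.indicator_of_notMem hy.2.1,
    Set.indicator_of_notMem hy.2.2]
  ring

lemma integral_gfun {p ra rb : ℝ} (c : ℝ) (hp0 : 0 ≤ p) (hp1 : p ≤ 1) (hra : 0 < ra)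
    (hra1 : ra ≤ 1) (hrb : 0 < rb) (hrb1 : rb ≤ 1) :
    ∫ y in (0:ℝ)..1, gfun (p - ra/2) (p + rb/2) c y = c * ((ra + rb)/2) := by
  unfold gfun
  rw [intervalIntegral.integral_add ((II_ind _ _ _).add (II_ind _ _ _)) (II_ind _ _ _),
      intervalIntegral.integral_add (II_ind _ _ _) (II_ind _ _ _),
      integral_indicator_Ioc, integral_indicator_Ioc, integral_indicator_Ioc]
  have hrm := region_measure hp0 hp1 hra hra1 hrb hrb1
  linear_combination c * hrm

lemma ae_restrict_off_finite' {t : Set ℝ} (ht : MeasurableSet t) {s : Set ℝ} (hs : s.Finite)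
    {P : ℝ → Prop} (h : ∀ y ∈ t, y ∉ s → P y) : ∀ᵐ y ∂(volume.restrict t), P y := by
  have h2 : ∀ᵐ y ∂(volume.restrict t), y ∉ s :=
    ae_restrict_off_finite t hs (fun y hy => hy)
  filter_upwards [MeasureTheory.ae_restrict_mem ht, h2] with y h1 h2
  exact h y h1 h2

lemma piece_rep {p ra rb y : ℝ} (hne2 : y ≠ p + rb/2) (hne4 : y ≠ p + rb/2 + 1)
    (hne6 : y ≠ p + rb/2 - 1)
    (hin : y ∈ Ioc (p - ra/2) (p + rb/2) ∨ y ∈ Ioc (p - ra/2 + 1) (p + rb/2 + 1) ∨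
      y ∈ Ioc (p - ra/2 - 1) (p + rb/2 - 1)) :
    ∃ t, -ra/2 < t ∧ t < rb/2 ∧ (y - p = t ∨ y - p = t - 1 ∨ y - p = t + 1) := by
  rcases hin with ⟨h1, h2⟩ | ⟨h1, h2⟩ | ⟨h1, h2⟩
  · exact ⟨y - p, by linarith,
      lt_of_le_of_ne (by linarith) (fun hc => hne2 (by linarith)), Or.inl rfl⟩
  · exact ⟨y - p - 1, by linarith,
      lt_of_le_of_ne (by linarith) (fun hc => hne4 (by linarith)), Or.inr (Or.inr (by ring))⟩
  · exact ⟨y - p + 1, by linarith,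
      lt_of_le_of_ne (by linarith) (fun hc => hne6 (by linarith)), Or.inr (Or.inl (by ring))⟩

lemma notpiece_rep {p ra rb y : ℝ} (hp : p ∈ Icc (0:ℝ) 1) (hy : y ∈ Icc (0:ℝ) 1)
    (hra : 0 < ra) (hrb : 0 < rb) (hra1 : ra ≤ 1) (hrb1 : rb ≤ 1)
    (hne1 : y ≠ p - ra/2) (hne3 : y ≠ p - ra/2 + 1)
    (hout : ¬(y ∈ Ioc (p - ra/2) (p + rb/2) ∨ y ∈ Ioc (p - ra/2 + 1) (p + rb/2 + 1) ∨
      y ∈ Ioc (p - ra/2 - 1) (p + rb/2 - 1))) :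
    ∃ τ, rb/2 < τ ∧ τ < 1 - ra/2 ∧ (y - p = τ ∨ y - p = τ - 1) := by
  obtain ⟨hp0, hp1⟩ := hp; obtain ⟨hy0, hy1⟩ := hy
  push_neg at hout
  obtain ⟨ho1, ho2, ho3⟩ := hout
  rw [Set.mem_Ioc] at ho1 ho2 ho3
  push_neg at ho1 ho2 ho3
  rcases le_or_gt 0 (y - p) with h | h
  · refine ⟨y - p, ?_, ?_, Or.inl rfl⟩
    · by_contra hc
      push_neg at hc
      exact absurd (ho1 (by linarith)) (by push_neg; linarith)
    · by_contra hc
      push_neg at hc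
      have hlt : p - ra/2 + 1 < y :=
        lt_of_le_of_ne (by linarith) (fun hc2 => hne3 hc2.symm)
      exact absurd (ho2 hlt) (by push_neg; linarith)
  · refine ⟨y - p + 1, ?_, ?_, Or.inr (by ring)⟩
    · by_contra hc
      push_neg at hc
      exact absurd (ho3 (by linarith)) (by push_neg; linarith)
    · by_contra hc
      push_neg at hc
      have hlt : p - ra/2 < y :=
        lt_of_le_of_ne (by linarith) (fun hc2 => hne1 hc2.symm)
      exact absurd (ho1 hlt) (by push_neg; linarith)

lemma abs_diff_le_one {u y : ℝ} (hu : u ∈ Icc (0:ℝ) 1) (hy : y ∈ Icc (0:ℝ) 1) :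
    |u - y| ≤ 1 := by
  obtain ⟨a, b⟩ := hu; obtain ⟨c, d⟩ := hy
  rw [abs_le]; constructor <;> linarith

lemma profit_le {n : ℕ} [NeZero n] (ξ : Fin n → ℝ) (k : Fin n)
    (hξ : ∀ i, ξ i ∈ Icc (0:ℝ) 1) {ra rb : ℝ}
    (hra : 0 < ra) (hra1 : ra < 1) (hrb : 0 < rb) (hrb1 : rb < 1)
    (hbex : ∃ i, ξ i - ξ k = rb ∨ ξ i - ξ k = rb - 1)
    (haex : ∃ i, ξ k - ξ i = ra ∨ ξ k - ξ i = ra - 1) :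
    profit k ξ ≤ (ra + rb) / (2 * (cls ξ k).card) := by
  have hp0 := (hξ k).1; have hp1 := (hξ k).2
  have hm0 : 0 < (cls ξ k).card := Finset.card_pos.mpr ⟨k, mem_cls_self ξ k⟩
  have hm0' : (0:ℝ) < (cls ξ k).card := by exact_mod_cast hm0
  set c : ℝ := 1 / (cls ξ k).card with hc
  have hc0 : 0 ≤ c := by positivity
  have hkey : ∀ y ∈ Icc (0:ℝ) 1,
      y ∉ (({ξ k - ra/2, ξ k + rb/2, ξ k - ra/2 + 1, ξ k + rb/2 + 1,
        ξ k - ra/2 - 1, ξ k + rb/2 - 1} : Finset ℝ) : Set ℝ) →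
      rho ξ k y ≤ gfun (ξ k - ra/2) (ξ k + rb/2) c y := by
    intro y hy hbad
    simp only [Finset.coe_insert, Set.mem_insert_iff, Finset.coe_singleton,
      Set.mem_singleton_iff, not_or] at hbad
    obtain ⟨hb1, hb2, hb3, hb4, hb5, hb6⟩ := hbad
    by_cases hin : y ∈ Ioc (ξ k - ra/2) (ξ k + rb/2) ∨
        y ∈ Ioc (ξ k - ra/2 + 1) (ξ k + rb/2 + 1) ∨
        y ∈ Ioc (ξ k - ra/2 - 1) (ξ k + rb/2 - 1)
    · rw [gfun_eq_c (by linarith) hin]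
      by_cases hk : k ∈ nearest ξ y
      · rw [rho, if_pos hk]
        have hsub : cls ξ k ⊆ nearest ξ y := by
          intro i hi
          rw [cls, Finset.mem_filter] at hi
          rw [nearest, Finset.mem_filter] at hk ⊢
          exact ⟨Finset.mem_univ _, fun j => by
            rw [cd_ceq (hξ i) (hξ k) hy hi.2]; exact hk.2 j⟩
        have hcard := Finset.card_le_card hsub
        rw [hc]
        apply one_div_le_one_div_of_le hm0'
        exact_mod_cast hcard
      · rw [rho, if_neg hk]; exact hc0
    · obtain ⟨τ, hτ1, hτ2, hτrep⟩ :=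
        notpiece_rep (hξ k) hy hra hrb hra1.le hrb1.le hb1 hb3 hin
      have hτ0 : 0 < τ := lt_trans (by positivity) hτ1
      have hτlt1 : τ < 1 := by linarith
      have hcdp : circleDist (ξ k) y = min τ (1 - τ) := by
        rw [cd_rep (hξ k) hy
          (by rcases hτrep with h | h; exacts [Or.inl h, Or.inr (Or.inl h)])
          (by linarith) (by linarith), abs_of_nonneg hτ0.le]
      have hknot : k ∉ nearest ξ y := by
        intro hk
        rw [nearest, Finset.mem_filter] at hk
        obtain ⟨ib, hib⟩ := hbex
        obtain ⟨ia, hia⟩ := haex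
        have hsb : |ξ ib - y| ≤ 1 := abs_diff_le_one (hξ ib) hy
        have hsa : |ξ ia - y| ≤ 1 := abs_diff_le_one (hξ ia) hy
        have hcdb : circleDist (ξ ib) y < τ := by
          rw [cd_formula hsb]
          apply out_b hrb hrb1 (by linarith) hτlt1 hsb
          rcases hib with h | h <;> rcases hτrep with h2 | h2
          · exact Or.inr (Or.inl (by linarith))
          · exact Or.inr (Or.inr (by linarith))
          · exact Or.inl (by linarith)
          · exact Or.inr (Or.inl (by linarith))
        have hcda : circleDist (ξ ia) y < 1 - τ := by
          rw [cd_formula hsa]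
          apply out_a hra hra1 (by linarith) hτ0 hτlt1 hsa
          rcases hia with h | h <;> rcases hτrep with h2 | h2
          · exact Or.inr (Or.inl (by linarith))
          · exact Or.inr (Or.inr (Or.inl (by linarith)))
          · exact Or.inr (Or.inr (Or.inl (by linarith)))
          · exact Or.inr (Or.inr (Or.inr (by linarith)))
        have h1 := hk.2 ib
        have h2 := hk.2 ia
        rw [hcdp] at h1 h2
        rcases min_cases τ (1-τ) with ⟨he, _⟩ | ⟨he, _⟩ <;> rw [he] at h1 h2 <;> linarith
      rw [rho, if_neg hknot, gfun_eq_zero hin]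
  have hmono : profit k ξ ≤ ∫ y in (0:ℝ)..1, gfun (ξ k - ra/2) (ξ k + rb/2) c y := by
    apply intervalIntegral.integral_mono_ae_restrict zero_le_one
      (intervalIntegrable_rho ξ k 0 1)
      (by unfold gfun
          exact ((II_ind _ _ _).add (II_ind _ _ _)).add (II_ind _ _ _))
    exact ae_restrict_off_finite' measurableSet_Icc (Finset.finite_toSet _) hkey
  calc profit k ξ ≤ _ := hmono
    _ = c * ((ra + rb)/2) := integral_gfun c hp0 hp1 hra hra1.le hrb hrb1.le
    _ = (ra + rb) / (2 * (cls ξ k).card) := by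
        rw [hc, div_mul_div_comm, one_mul, mul_comm ((cls ξ k).card : ℝ) 2]

lemma profit_ge {n : ℕ} [NeZero n] (ξ : Fin n → ℝ) (k : Fin n)
    (hξ : ∀ i, ξ i ∈ Icc (0:ℝ) 1) {ra rb : ℝ}
    (hra : 0 < ra) (hra1 : ra ≤ 1) (hrb : 0 < rb) (hrb1 : rb ≤ 1)
    (hsep : ∀ i, ceq (ξ i) (ξ k) ∨
      ∃ d, rb ≤ d ∧ d ≤ 1 - ra ∧ (ξ i - ξ k = d ∨ ξ i - ξ k = d - 1)) :
    (ra + rb) / (2 * (cls ξ k).card) ≤ profit k ξ := by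
  have hp0 := (hξ k).1; have hp1 := (hξ k).2
  have hm0 : 0 < (cls ξ k).card := Finset.card_pos.mpr ⟨k, mem_cls_self ξ k⟩
  have hm0' : (0:ℝ) < (cls ξ k).card := by exact_mod_cast hm0
  set c : ℝ := 1 / (cls ξ k).card with hc
  have hkey : ∀ y ∈ Icc (0:ℝ) 1,
      y ∉ (({ξ k - ra/2, ξ k + rb/2, ξ k - ra/2 + 1, ξ k + rb/2 + 1,
        ξ k - ra/2 - 1, ξ k + rb/2 - 1} : Finset ℝ) : Set ℝ) →
      gfun (ξ k - ra/2) (ξ k + rb/2) c y ≤ rho ξ k y := by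
    intro y hy hbad
    simp only [Finset.coe_insert, Set.mem_insert_iff, Finset.coe_singleton,
      Set.mem_singleton_iff, not_or] at hbad
    obtain ⟨hb1, hb2, hb3, hb4, hb5, hb6⟩ := hbad
    by_cases hin : y ∈ Ioc (ξ k - ra/2) (ξ k + rb/2) ∨
        y ∈ Ioc (ξ k - ra/2 + 1) (ξ k + rb/2 + 1) ∨
        y ∈ Ioc (ξ k - ra/2 - 1) (ξ k + rb/2 - 1)
    · obtain ⟨t, ht1, ht2, htrep⟩ := piece_rep hb2 hb4 hb6 hin
      have hcdp : circleDist (ξ k) y = min |t| (1 - |t|) :=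
        cd_rep (hξ k) hy htrep (by linarith) (by linarith)
      have hnear : nearest ξ y = cls ξ k := by
        apply Finset.ext; intro i
        rw [nearest, Finset.mem_filter, cls, Finset.mem_filter]
        constructor
        · rintro ⟨-, hle⟩
          refine ⟨Finset.mem_univ _, ?_⟩
          by_contra hic
          rcases hsep i with hceq | ⟨d, hd1, hd2, hdrep⟩
          · exact hic hceq
          · have hsi : |ξ i - y| ≤ 1 := abs_diff_le_one (hξ i) hy
            have hlt := in_lt hra hrb hra1 hrb1 ht1 ht2 hd1 hd2 hsi
              (by have := rep5 hdrep htrep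
                  have he : ξ i - y = (ξ i - ξ k) - (y - ξ k) := by ring
                  rw [he]; exact this)
            have h2 := hle k
            rw [cd_formula hsi, hcdp] at h2
            linarith
        · rintro ⟨-, hceq⟩
          refine ⟨Finset.mem_univ _, fun j => ?_⟩
          rw [cd_ceq (hξ i) (hξ k) hy hceq]
          rcases hsep j with hceqj | ⟨d, hd1, hd2, hdrep⟩
          · rw [cd_ceq (hξ j) (hξ k) hy hceqj]
          · have hsj : |ξ j - y| ≤ 1 := abs_diff_le_one (hξ j) hy
            rw [cd_formula hsj, hcdp]
            apply le_of_lt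
            apply in_lt hra hrb hra1 hrb1 ht1 ht2 hd1 hd2 hsj
            have he : ξ j - y = (ξ j - ξ k) - (y - ξ k) := by ring
            rw [he]; exact rep5 hdrep htrep
      rw [gfun_eq_c (by linarith) hin, rho,
        if_pos (by rw [hnear]; exact mem_cls_self ξ k), hnear, hc]
    · rw [gfun_eq_zero hin]
      exact rho_nonneg ξ k y
  have hmono : (∫ y in (0:ℝ)..1, gfun (ξ k - ra/2) (ξ k + rb/2) c y) ≤ profit k ξ := by
    apply intervalIntegral.integral_mono_ae_restrict zero_le_one
      (by unfold gfun
          exact ((II_ind _ _ _).add (II_ind _ _ _)).add (II_ind _ _ _))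
      (intervalIntegrable_rho ξ k 0 1)
    exact ae_restrict_off_finite' measurableSet_Icc (Finset.finite_toSet _) hkey
  calc (ra + rb) / (2 * (cls ξ k).card)
      = c * ((ra + rb)/2) := by
        rw [hc, div_mul_div_comm, one_mul, mul_comm ((cls ξ k).card : ℝ) 2]
    _ = ∫ y in (0:ℝ)..1, gfun (ξ k - ra/2) (ξ k + rb/2) c y :=
        (integral_gfun c hp0 hp1 hra hra1 hrb hrb1).symm
    _ ≤ profit k ξ := hmono

lemma profit_all_ceq {n : ℕ} [NeZero n] (ξ : Fin n → ℝ) (k : Fin n)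
    (hξ : ∀ i, ξ i ∈ Icc (0:ℝ) 1) (h : ∀ i, ceq (ξ i) (ξ k)) :
    profit k ξ = 1 / n := by
  unfold profit
  have hcong : ∀ y ∈ Set.uIcc (0:ℝ) 1, rho ξ k y = 1/(n:ℝ) := by
    intro y hy
    have hy' : y ∈ Icc (0:ℝ) 1 := by rwa [Set.uIcc_of_le zero_le_one] at hy
    have hne : nearest ξ y = Finset.univ := by
      apply Finset.ext; intro j
      simp only [nearest, Finset.mem_filter, Finset.mem_univ, true_and, iff_true]
      intro i
      rw [cd_ceq (hξ j) (hξ k) hy' (h j), cd_ceq (hξ i) (hξ k) hy' (h i)]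
    rw [rho, hne]
    simp
  rw [intervalIntegral.integral_congr hcong, intervalIntegral.integral_const]
  simp

section Sorted

variable {n : ℕ} [NeZero n]

lemma fin_val_add_one (j : Fin n) (h : (j:ℕ)+1 < n) : ((j+1 : Fin n):ℕ) = (j:ℕ)+1 := by
  rw [Fin.add_def]
  simp only [Fin.val_one']
  rw [Nat.mod_eq_of_lt (show 1 < n by omega)]
  exact Nat.mod_eq_of_lt h

lemma fin_add_one_wrap (j : Fin n) (h : (j:ℕ)+1 = n) : j + 1 = 0 := by
  apply Fin.ext
  rw [Fin.add_def]
  simp only [Fin.val_one', Fin.val_zero]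
  rcases (show n = 1 ∨ 2 ≤ n by omega) with h1 | h1
  · subst h1; omega
  · rw [Nat.mod_eq_of_lt (show 1 < n by omega), h, Nat.mod_self]

lemma fin_ne_add_one (hn : 2 ≤ n) (j : Fin n) : j ≠ j + 1 := by
  intro h
  rcases lt_or_eq_of_le (Nat.succ_le_of_lt j.isLt) with h2 | h2
  · have := fin_val_add_one j h2
    have := congrArg Fin.val h
    omega
  · have h3 := fin_add_one_wrap j h2
    rw [h3] at h
    have := congrArg Fin.val h
    simp only [Fin.val_zero] at this
    omega

lemma mono_val {x : Fin n → ℝ} (hmono : Monotone x) {a b : Fin n} (h : (a:ℕ) ≤ (b:ℕ)) :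
    x a ≤ x b := hmono h

lemma x_nonneg {x : Fin n → ℝ} (hx0 : x 0 = 0) (hmono : Monotone x) (i : Fin n) : 0 ≤ x i := by
  rw [← hx0]
  exact mono_val hmono (by simp)

lemma gap_rep (x : Fin n → ℝ) (j : Fin n) :
    x (j+1) - x j = gap x j ∨ x (j+1) - x j = gap x j - 1 := by
  unfold gap
  split_ifs
  · right; ring
  · left; ring

lemma gap_nonneg {x : Fin n → ℝ} (hx0 : x 0 = 0) (hmono : Monotone x) (hx1 : ∀ j, x j ≤ 1)
    (j : Fin n) : 0 ≤ gap x j := by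
  unfold gap
  split_ifs with h
  · rw [fin_add_one_wrap j h, hx0]
    linarith [hx1 j]
  · have h2 : (j:ℕ)+1 < n := lt_of_le_of_ne (Nat.succ_le_of_lt j.isLt) h
    have h3 : x j ≤ x (j+1) :=
      mono_val hmono (by rw [fin_val_add_one j h2]; omega)
    linarith

lemma gap_le_one {x : Fin n → ℝ} (hx0 : x 0 = 0) (hmono : Monotone x) (hx1 : ∀ j, x j ≤ 1)
    (j : Fin n) : gap x j ≤ 1 := by
  unfold gap
  split_ifs with h
  · rw [fin_add_one_wrap j h, hx0]
    linarith [x_nonneg hx0 hmono j]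
  · linarith [hx1 (j+1), x_nonneg hx0 hmono j]

lemma sum_gap {x : Fin n → ℝ} (hx0 : x 0 = 0) : ∑ j, gap x j = 1 := by
  unfold gap
  rw [Finset.sum_sub_distrib, Finset.sum_add_distrib]
  have h1 : ∑ j : Fin n, (if (j:ℕ)+1 = n then (1:ℝ) else 0) = 1 := by
    have hpos : 0 < n := Nat.pos_of_ne_zero (NeZero.ne n)
    rw [Finset.sum_eq_single (⟨n-1, by omega⟩ : Fin n)
      (fun b _ hb => by
        have hbl := b.isLt
        have hbc : (b:ℕ)+1 ≠ n := by
          intro hc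
          exact hb (Fin.ext (show (b:ℕ) = n-1 by omega))
        simp [hbc])
      (fun h => absurd (Finset.mem_univ _) h)]
    rw [if_pos (show ((⟨n-1, by omega⟩ : Fin n):ℕ)+1 = n by simp; omega)]
  have h2 : ∑ j : Fin n, x (j+1) = ∑ j : Fin n, x j :=
    Fintype.sum_equiv (Equiv.addRight (1 : Fin n)) _ _ (fun j => rfl)
  rw [h1, h2]
  ring

lemma maxGap_ge {x : Fin n → ℝ} (j : Fin n) : gap x j ≤ maxGap x :=
  le_ciSup (Set.Finite.bddAbove (Set.finite_range _)) j

lemma maxGap_exists (x : Fin n → ℝ) : ∃ l, maxGap x = gap x l := by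
  obtain ⟨l, -, hl⟩ := Finset.exists_max_image Finset.univ (gap x)
    ⟨0, Finset.mem_univ _⟩
  exact ⟨l, le_antisymm (ciSup_le fun j => hl j (Finset.mem_univ _)) (maxGap_ge l)⟩

lemma maxGap_pos {x : Fin n → ℝ} (hx0 : x 0 = 0) : 0 < maxGap x := by
  by_contra hc
  push_neg at hc
  have h1 : ∑ j, gap x j ≤ 0 :=
    Finset.sum_nonpos (fun j _ => le_trans (maxGap_ge j) hc)
  rw [sum_gap hx0] at h1
  linarith

lemma maxGap_le_one {x : Fin n → ℝ} (hx0 : x 0 = 0) (hmono : Monotone x)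
    (hx1 : ∀ j, x j ≤ 1) : maxGap x ≤ 1 := by
  obtain ⟨l, hl⟩ := maxGap_exists x
  rw [hl]; exact gap_le_one hx0 hmono hx1 l

lemma two_gap_le_one {x : Fin n → ℝ} (hx0 : x 0 = 0) (hmono : Monotone x) (hx1 : ∀ j, x j ≤ 1)
    {a b : Fin n} (hab : a ≠ b) : gap x a + gap x b ≤ 1 := by
  have h1 : gap x a + gap x b = ∑ j ∈ ({a, b} : Finset (Fin n)), gap x j := by
    rw [Finset.sum_pair hab]
  rw [h1, ← sum_gap (x := x) hx0]
  apply Finset.sum_le_sum_of_subset_of_nonneg (Finset.subset_univ _)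
  intro i _ _
  exact gap_nonneg hx0 hmono hx1 i

lemma ceq_of_gap_zero {x : Fin n → ℝ} (j : Fin n) (h : gap x j = 0) :
    ceq (x (j+1)) (x j) := by
  unfold gap at h
  split_ifs at h with hw
  · exact Or.inr (Or.inr (by linarith))
  · exact Or.inl (by linarith)

lemma gap_01_of_ceq {x : Fin n → ℝ} (hx0 : x 0 = 0) (hmono : Monotone x) (hx1 : ∀ j, x j ≤ 1)
    (j : Fin n) (h : ceq (x (j+1)) (x j)) : gap x j = 0 ∨ gap x j = 1 := by
  have h1 := gap_rep x j
  have h2 := gap_nonneg hx0 hmono hx1 j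
  have h3 := gap_le_one hx0 hmono hx1 j
  rcases h with h | h | h <;> rcases h1 with h1 | h1
  · left; linarith
  · right; linarith
  · right; linarith
  · exfalso; linarith
  · exfalso; linarith
  · left; linarith

end Sorted

lemma succ_cases {n : ℕ} [NeZero n] (j k : Fin n) (hjk : k = j + 1) :
    ((j:ℕ)+1 < n ∧ (k:ℕ) = (j:ℕ)+1) ∨ ((j:ℕ)+1 = n ∧ (k:ℕ) = 0) := by
  rcases lt_or_eq_of_le (Nat.succ_le_of_lt j.isLt) with h | h
  · exact Or.inl ⟨h, by rw [hjk, fin_val_add_one j h]⟩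
  · exact Or.inr ⟨h, by rw [hjk, fin_add_one_wrap j h]; rfl⟩

lemma gap_eq_nowrap {n : ℕ} [NeZero n] (x : Fin n → ℝ) (j : Fin n) (h : (j:ℕ)+1 < n) :
    gap x j = x (j+1) - x j := by
  unfold gap
  rw [if_neg (by omega)]
  ring

lemma gap_eq_wrap {n : ℕ} [NeZero n] (x : Fin n → ℝ) (j : Fin n) (h : (j:ℕ)+1 = n) :
    gap x j = 1 + x 0 - x j := by
  unfold gap
  rw [if_pos h, fin_add_one_wrap j h]

lemma sep_basic {n : ℕ} [NeZero n] (hn : 2 ≤ n) (x : Fin n → ℝ) (hx0 : x 0 = 0)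
    (hmono : Monotone x) (hx1 : ∀ i, x i ≤ 1) (j k : Fin n) (hjk : k = j + 1) (i : Fin n)
    (hic : ¬ ceq (x i) (x k)) :
    ∃ d, gap x k ≤ d ∧ d ≤ 1 - gap x j ∧ (x i - x k = d ∨ x i - x k = d - 1) := by
  have hin := i.isLt
  have hkn := k.isLt
  have hjn := j.isLt
  have hxi0 := x_nonneg hx0 hmono i
  have hxi1 := hx1 i
  have hxk0 := x_nonneg hx0 hmono k
  have hxk1 := hx1 k
  have hxj0 := x_nonneg hx0 hmono j
  have hxj1 := hx1 j
  rcases succ_cases j k hjk with ⟨hJ, hK⟩ | ⟨hJ, hK⟩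
  · have hgj : gap x j = x k - x j := by rw [gap_eq_nowrap x j hJ, ← hjk]
    rcases lt_trichotomy (i:ℕ) (k:ℕ) with hik | hik | hik
    · have hxij : x i ≤ x j := mono_val hmono (by omega)
      have hxik : x i ≤ x k := mono_val hmono (by omega)
      refine ⟨x i - x k + 1, ?_, by rw [hgj]; linarith, Or.inr (by ring)⟩
      rcases Nat.lt_or_ge ((k:ℕ)+1) n with hK2 | hK2
      · rw [gap_eq_nowrap x k hK2]
        have := hx1 (k+1)
        linarith
      · rw [gap_eq_wrap x k (by omega), hx0]
        linarith
    · exact absurd (Or.inl (by rw [show i = k from Fin.ext hik])) hic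
    · have hK2 : (k:ℕ)+1 < n := by omega
      have hxik : x k ≤ x i := mono_val hmono (by omega)
      have hxi' : x (k+1) ≤ x i := mono_val hmono (by rw [fin_val_add_one k hK2]; omega)
      refine ⟨x i - x k, ?_, by rw [hgj]; linarith, Or.inl rfl⟩
      rw [gap_eq_nowrap x k hK2]
      linarith
  · have hk0 : k = 0 := Fin.ext (by rw [hK]; rfl)
    have hxkv : x k = 0 := by rw [hk0, hx0]
    have hgj : gap x j = 1 - x j := by rw [gap_eq_wrap x j hJ, hx0]; ring
    have hik : 0 < (i:ℕ) := by
      rcases Nat.eq_zero_or_pos (i:ℕ) with h0 | h0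
      · exact absurd (Or.inl (by rw [show i = k from Fin.ext (by omega)])) hic
      · exact h0
    have hxij : x i ≤ x j := mono_val hmono (by omega)
    have hK2 : (k:ℕ)+1 < n := by omega
    have hxi' : x (k+1) ≤ x i := mono_val hmono (by rw [fin_val_add_one k hK2]; omega)
    refine ⟨x i - x k, ?_, by rw [hgj, hxkv]; linarith, Or.inl rfl⟩
    rw [gap_eq_nowrap x k hK2]
    linarith

lemma sep_right {n : ℕ} [NeZero n] (hn : 2 ≤ n) (x : Fin n → ℝ) (hx0 : x 0 = 0)
    (hmono : Monotone x) (hx1 : ∀ i, x i ≤ 1) (j k : Fin n) (hjk : k = j + 1)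
    (hz : gap x k = 0) (i : Fin n) (hic : ¬ ceq (x i) (x k)) :
    ∃ d, gap x k + gap x (k+1) ≤ d ∧ d ≤ 1 - gap x j ∧
      (x i - x k = d ∨ x i - x k = d - 1) := by
  have hin := i.isLt
  have hkn := k.isLt
  have hjn := j.isLt
  have hxi0 := x_nonneg hx0 hmono i
  have hxi1 := hx1 i
  have hxk0 := x_nonneg hx0 hmono k
  have hxk1 := hx1 k
  have hxj0 := x_nonneg hx0 hmono j
  have hxj1 := hx1 j
  have hink : i ≠ k := fun hc => hic (hc ▸ ceq_refl _)
  rcases succ_cases j k hjk with ⟨hJ, hK⟩ | ⟨hJ, hK⟩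
  · -- j nonwrap : K = J+1 ≥ 1
    have hgj : gap x j = x k - x j := by rw [gap_eq_nowrap x j hJ, ← hjk]
    rcases Nat.lt_or_ge ((k:ℕ)+1) n with hK2 | hK2
    · -- k nonwrap, x(k+1) = x k
      have hzeq : x (k+1) = x k := by
        rw [gap_eq_nowrap x k hK2] at hz
        linarith
      have hik1 : (i:ℕ) ≠ (k:ℕ)+1 := by
        intro hc
        apply hic
        rw [show i = k+1 from Fin.ext (by rw [fin_val_add_one k hK2]; omega), hzeq]
        exact ceq_refl _
      rcases lt_trichotomy (i:ℕ) (k:ℕ) with hik | hik | hik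
      · have hxij : x i ≤ x j := mono_val hmono (by omega)
        refine ⟨x i - x k + 1, ?_, by rw [hgj]; linarith, Or.inr (by ring)⟩
        rw [hz]
        rcases Nat.lt_or_ge ((k:ℕ)+2) n with hK3 | hK3
        · have e1 : ((k+1 : Fin n):ℕ)+1 < n := by rw [fin_val_add_one k hK2]; omega
          rw [gap_eq_nowrap x (k+1) e1, hzeq]
          have := hx1 (k+1+1)
          linarith
        · have e1 : ((k+1 : Fin n):ℕ)+1 = n := by rw [fin_val_add_one k hK2]; omega
          rw [gap_eq_wrap x (k+1) e1, hzeq, hx0]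
          linarith
      · exact absurd (Fin.ext hik) hink
      · -- i above k; i.val ≥ K+2
        have hik2 : (k:ℕ)+2 ≤ (i:ℕ) := by omega
        have hK3 : (k:ℕ)+2 < n := by omega
        have e1 : ((k+1 : Fin n):ℕ)+1 < n := by rw [fin_val_add_one k hK2]; omega
        have hxi' : x (k+1+1) ≤ x i := mono_val hmono
          (by rw [fin_val_add_one (k+1) e1, fin_val_add_one k hK2]; omega)
        refine ⟨x i - x k, ?_, by rw [hgj]; linarith, Or.inl rfl⟩
        rw [hz, gap_eq_nowrap x (k+1) e1, hzeq]
        linarith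
    · -- k wrap : K+1 = n, x k = 1
      have hK2' : (k:ℕ)+1 = n := by omega
      have hxkv : x k = 1 := by
        rw [gap_eq_wrap x k hK2', hx0] at hz
        linarith
      have hk10 : k + 1 = 0 := fin_add_one_wrap k hK2'
      have hiKv : (i:ℕ) ≠ (k:ℕ) := fun hc => hink (Fin.ext hc)
      have hik0 : 0 < (i:ℕ) := by
        rcases Nat.eq_zero_or_pos (i:ℕ) with h0 | h0
        · exfalso
          apply hic
          right; right
          rw [show i = (0 : Fin n) from Fin.ext (by simp only [Fin.val_zero]; omega),
            hx0, hxkv]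
          norm_num
        · exact h0
      have hitop : (i:ℕ) < n - 1 := by omega
      have hxij : x i ≤ x j := mono_val hmono (by omega)
      have hxilt : x i < x k :=
        lt_of_le_of_ne (by rw [hxkv]; exact hxi1) (fun hc => hic (Or.inl hc))
      have h1n : ((0:Fin n):ℕ)+1 < n := by
        simp only [Fin.val_zero]
        omega
      have hx01i : x (0+1) ≤ x i := mono_val hmono
        (by rw [fin_val_add_one 0 h1n]; simp only [Fin.val_zero]; omega)
      refine ⟨x i - x k + 1, ?_, by rw [hgj]; linarith, Or.inr (by ring)⟩
      rw [hz, hk10, gap_eq_nowrap x 0 h1n, hx0]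
      linarith
  · -- j wrap : K = 0
    have hk0 : k = 0 := Fin.ext (by rw [hK]; rfl)
    have hxkv : x k = 0 := by rw [hk0, hx0]
    have hgj : gap x j = 1 - x j := by rw [gap_eq_wrap x j hJ, hx0]; ring
    have hK2 : (k:ℕ)+1 < n := by omega
    have hzeq : x (k+1) = x k := by
      rw [gap_eq_nowrap x k hK2] at hz
      linarith
    have hiKv : (i:ℕ) ≠ (k:ℕ) := fun hc => hink (Fin.ext hc)
    have hik1 : (i:ℕ) ≠ (k:ℕ)+1 := by
      intro hc
      apply hic
      rw [show i = k+1 from Fin.ext (by rw [fin_val_add_one k hK2]; omega), hzeq]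
      exact ceq_refl _
    have hik2 : 2 ≤ (i:ℕ) := by omega
    have h2n : 2 < n := by omega
    have e1 : ((k+1 : Fin n):ℕ)+1 < n := by rw [fin_val_add_one k hK2]; omega
    have hxi' : x (k+1+1) ≤ x i := mono_val hmono
      (by rw [fin_val_add_one (k+1) e1, fin_val_add_one k hK2]; omega)
    have hxij : x i ≤ x j := mono_val hmono (by omega)
    refine ⟨x i - x k, ?_, by rw [hgj, hxkv]; linarith, Or.inl rfl⟩
    rw [hz, gap_eq_nowrap x (k+1) e1, hzeq]
    linarith

lemma sep_left {n : ℕ} [NeZero n] (hn : 2 ≤ n) (x : Fin n → ℝ) (hx0 : x 0 = 0)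
    (hmono : Monotone x) (hx1 : ∀ i, x i ≤ 1) (j2 j k : Fin n) (hj : j = j2 + 1)
    (hjk : k = j + 1) (hz : gap x j = 0) (i : Fin n) (hic : ¬ ceq (x i) (x k)) :
    ∃ d, gap x k ≤ d ∧ d ≤ 1 - (gap x j2 + gap x j) ∧
      (x i - x k = d ∨ x i - x k = d - 1) := by
  have hin := i.isLt
  have hkn := k.isLt
  have hjn := j.isLt
  have hj2n := j2.isLt
  have hxi0 := x_nonneg hx0 hmono i
  have hxi1 := hx1 i
  have hxk0 := x_nonneg hx0 hmono k
  have hxk1 := hx1 k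
  have hxj0 := x_nonneg hx0 hmono j
  have hxj1 := hx1 j
  have hxj20 := x_nonneg hx0 hmono j2
  have hxj21 := hx1 j2
  have hink : i ≠ k := fun hc => hic (hc ▸ ceq_refl _)
  have hiKv : (i:ℕ) ≠ (k:ℕ) := fun hc => hink (Fin.ext hc)
  rcases succ_cases j k hjk with ⟨hJ, hK⟩ | ⟨hJ, hK⟩
  · -- j nonwrap : K = J+1
    have hzeq : x k = x j := by
      rw [gap_eq_nowrap x j hJ, ← hjk] at hz
      linarith
    have hiJv : (i:ℕ) ≠ (j:ℕ) := by
      intro hc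
      exact hic (Or.inl (by rw [show i = j from Fin.ext hc, hzeq]))
    rcases succ_cases j2 j hj with ⟨hJ2, hJv⟩ | ⟨hJ2, hJv⟩
    · -- j2 nonwrap : J = J2+1
      have hgj2 : gap x j2 = x j - x j2 := by rw [gap_eq_nowrap x j2 hJ2, ← hj]
      rcases (show (i:ℕ) < (j:ℕ) ∨ (k:ℕ) < (i:ℕ) by omega) with hilt | hilt
      · -- i below j2-side
        have hxij2 : x i ≤ x j2 := mono_val hmono (by omega)
        have hxik : x i ≤ x k := mono_val hmono (by omega)
        refine ⟨x i - x k + 1, ?_, by rw [hgj2, hz, hzeq]; linarith, Or.inr (by ring)⟩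
        rcases Nat.lt_or_ge ((k:ℕ)+1) n with hK2 | hK2
        · rw [gap_eq_nowrap x k hK2]
          have := hx1 (k+1)
          linarith
        · rw [gap_eq_wrap x k (by omega), hx0]
          linarith
      · -- i above k
        have hxik : x k ≤ x i := mono_val hmono (by omega)
        have hxigt : x k < x i := lt_of_le_of_ne hxik (fun hc => hic (Or.inl hc.symm))
        have hK2 : (k:ℕ)+1 < n := by omega
        have hxi' : x (k+1) ≤ x i := mono_val hmono
          (by rw [fin_val_add_one k hK2]; omega)
        refine ⟨x i - x k, ?_, by rw [hgj2, hz, hzeq]; linarith, Or.inl rfl⟩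
        rw [gap_eq_nowrap x k hK2]
        linarith
    · -- j2 wrap : J = 0, j = 0, x j = 0, K = 1
      have hj0 : j = 0 := Fin.ext (by rw [hJv]; rfl)
      have hxjv : x j = 0 := by rw [hj0, hx0]
      have hgj2 : gap x j2 = 1 - x j2 := by rw [gap_eq_wrap x j2 hJ2, hx0]; ring
      have hxkv : x k = 0 := by rw [hzeq, hxjv]
      have hik2 : 2 ≤ (i:ℕ) := by omega
      have h2n : 2 < n := by omega
      have hK2 : (k:ℕ)+1 < n := by omega
      have hxi' : x (k+1) ≤ x i := mono_val hmono
        (by rw [fin_val_add_one k hK2]; omega)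
      have hxij2 : x i ≤ x j2 := mono_val hmono (by omega)
      refine ⟨x i - x k, ?_, by rw [hgj2, hz, hxkv]; linarith, Or.inl rfl⟩
      rw [gap_eq_nowrap x k hK2]
      linarith
  · -- j wrap : J = n-1, x j = 1, K = 0
    have hxjv : x j = 1 := by
      rw [gap_eq_wrap x j hJ, hx0] at hz
      linarith
    have hk0 : k = 0 := Fin.ext (by rw [hK]; rfl)
    have hxkv : x k = 0 := by rw [hk0, hx0]
    have hJ2 : (j2:ℕ)+1 < n := by
      rcases succ_cases j2 j hj with ⟨h1, h2⟩ | ⟨h1, h2⟩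
      · exact h1
      · omega
    have hJv : (j:ℕ) = (j2:ℕ)+1 := by rw [hj, fin_val_add_one j2 hJ2]
    have hgj2 : gap x j2 = x j - x j2 := by rw [gap_eq_nowrap x j2 hJ2, ← hj]
    have hiJv : (i:ℕ) ≠ (j:ℕ) := by
      intro hc
      apply hic
      right; left
      rw [show i = j from Fin.ext hc, hxjv, hxkv]
      norm_num
    have hik1 : 1 ≤ (i:ℕ) := by omega
    have hitop : (i:ℕ) ≤ n - 2 := by omega
    have h1n : ((0:Fin n):ℕ)+1 < n := by
      simp only [Fin.val_zero]
      omega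
    have hx01i : x (0+1) ≤ x i := mono_val hmono
      (by rw [fin_val_add_one 0 h1n]; simp only [Fin.val_zero]; omega)
    have hxij2 : x i ≤ x j2 := mono_val hmono (by omega)
    refine ⟨x i - x k, ?_, by rw [hgj2, hz, hxjv, hxkv]; linarith, Or.inl rfl⟩
    rw [hk0, gap_eq_nowrap x 0 h1n, hx0]
    linarith

lemma cls_structure {n : ℕ} [NeZero n] (hn : 2 ≤ n) (x : Fin n → ℝ) (hx0 : x 0 = 0)
    (hmono : Monotone x) (hx1 : ∀ i, x i ≤ 1) (j k : Fin n) (hjk : k = j + 1)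
    (hCz : ∀ j', ¬(gap x j' = 0 ∧ gap x (j'+1) = 0)) (i : Fin n)
    (h : ceq (x i) (x k)) :
    i = k ∨ (gap x j = 0 ∧ i = j) ∨ (gap x k = 0 ∧ i = k + 1) := by
  have hin := i.isLt
  have hkn := k.isLt
  have hjn := j.isLt
  have hxi0 := x_nonneg hx0 hmono i
  have hxi1 := hx1 i
  have hxk0 := x_nonneg hx0 hmono k
  have hxk1 := hx1 k
  rcases h with h | h | h
  · -- x i = x k
    rcases lt_trichotomy (i:ℕ) (k:ℕ) with hik | hik | hik
    · -- i below k: conclude i = j with gap j = 0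
      have hK1 : 1 ≤ (k:ℕ) := by omega
      obtain ⟨hJ, hKv⟩ : (j:ℕ)+1 < n ∧ (k:ℕ) = (j:ℕ)+1 := by
        rcases succ_cases j k hjk with h1 | ⟨h1, h2⟩
        · exact h1
        · omega
      have hxj : x j = x k := le_antisymm (mono_val hmono (by omega))
        (by rw [← h]; exact mono_val hmono (by omega))
      have hgj : gap x j = 0 := by
        rw [gap_eq_nowrap x j hJ, ← hjk, hxj]; ring
      right; left
      refine ⟨hgj, ?_⟩
      by_contra hij
      have hiv : (i:ℕ) < (j:ℕ) := by
        rcases lt_or_eq_of_le (show (i:ℕ) ≤ (j:ℕ) by omega) with h1 | h1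
        · exact h1
        · exact absurd (Fin.ext h1) hij
      -- x ⟨J-1⟩ = x k, gap at j-1 is 0 too
      have hJ1 : 1 ≤ (j:ℕ) := by omega
      set j2 : Fin n := ⟨(j:ℕ)-1, by omega⟩ with hj2
      have hj2j : j2 + 1 = j := Fin.ext (by rw [fin_val_add_one j2 (by simp [hj2]; omega)]; simp [hj2]; omega)
      have hxj2 : x j2 = x k := le_antisymm (mono_val hmono (by simp [hj2]; omega))
        (by rw [← h]; exact mono_val hmono (by simp [hj2]; omega))
      have hgj2 : gap x j2 = 0 := by
        rw [gap_eq_nowrap x j2 (by simp [hj2]; omega), hj2j, hxj, hxj2]; ring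
      exact absurd ⟨hgj2, by rw [hj2j]; exact hgj⟩ (hCz j2)
    · exact Or.inl (Fin.ext hik)
    · -- i above k
      have hK2 : (k:ℕ)+1 < n := by omega
      have hxk1' : x (k+1) = x k := le_antisymm
        (by rw [← h]; exact mono_val hmono (by rw [fin_val_add_one k hK2]; omega))
        (mono_val hmono (by rw [fin_val_add_one k hK2]; omega))
      have hgk : gap x k = 0 := by rw [gap_eq_nowrap x k hK2, hxk1']; ring
      right; right
      refine ⟨hgk, ?_⟩
      by_contra hik1
      have hiv : (k:ℕ)+2 ≤ (i:ℕ) := by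
        rcases lt_or_eq_of_le (show (k:ℕ)+1 ≤ (i:ℕ) by omega) with h1 | h1
        · omega
        · exact absurd (Fin.ext (by rw [fin_val_add_one k hK2]; omega)) hik1
      have hK3 : (k:ℕ)+2 < n := by omega
      have e1 : ((k+1 : Fin n):ℕ)+1 < n := by rw [fin_val_add_one k hK2]; omega
      have hxk2 : x (k+1+1) = x (k+1) := by
        rw [hxk1']
        refine le_antisymm ?_ ?_
        · rw [← h]
          exact mono_val hmono (by rw [fin_val_add_one (k+1) e1, fin_val_add_one k hK2]; omega)
        · rw [← hxk1']
          exact mono_val hmono (by rw [fin_val_add_one (k+1) e1]; omega)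
      have hgk1 : gap x (k+1) = 0 := by rw [gap_eq_nowrap x (k+1) e1, hxk2]; ring
      exact absurd ⟨hgk, hgk1⟩ (hCz k)
  · -- x i = x k + 1 : x k = 0, x i = 1
    have hxkv : x k = 0 := by linarith
    have hxiv : x i = 1 := by linarith
    have hik : (k:ℕ) < (i:ℕ) := by
      by_contra hc
      push_neg at hc
      have := mono_val hmono hc
      linarith
    have hK0 : (k:ℕ) = 0 := by
      by_contra hc
      have h1n : ((0:Fin n):ℕ)+1 < n := by simp only [Fin.val_zero]; omega
      have hx1v : x (0+1) = 0 := le_antisymm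
        (by rw [← hxkv]; exact mono_val hmono (by rw [fin_val_add_one 0 h1n]; simp only [Fin.val_zero]; omega))
        (x_nonneg hx0 hmono _)
      have hg0 : gap x 0 = 0 := by rw [gap_eq_nowrap x 0 h1n, hx1v, hx0]; ring
      set w : Fin n := ⟨n-1, by omega⟩ with hw
      have hxw : x w = 1 := le_antisymm (hx1 w)
        (by rw [← hxiv]; exact mono_val hmono (by simp [hw]; omega))
      have hw1 : w + 1 = 0 := fin_add_one_wrap w (by simp [hw]; omega)
      have hgw : gap x w = 0 := by
        rw [gap_eq_wrap x w (by simp [hw]; omega), hx0, hxw]; ring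
      exact absurd ⟨hgw, by rw [hw1]; exact hg0⟩ (hCz w)
    obtain ⟨hJ, hJv⟩ : (j:ℕ)+1 = n ∧ (k:ℕ) = 0 := by
      rcases succ_cases j k hjk with ⟨h1, h2⟩ | h1
      · omega
      · exact h1
    have hJn : (j:ℕ) = n - 1 := by omega
    have hxj : x j = 1 := le_antisymm (hx1 j)
      (by rw [← hxiv]; exact mono_val hmono (by omega))
    have hgj : gap x j = 0 := by
      rw [gap_eq_wrap x j hJ, hx0, hxj]; ring
    right; left
    refine ⟨hgj, ?_⟩
    by_contra hij
    have hiv : (i:ℕ) < (j:ℕ) := by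
      rcases lt_or_eq_of_le (show (i:ℕ) ≤ (j:ℕ) by omega) with h1 | h1
      · exact h1
      · exact absurd (Fin.ext h1) hij
    set j2 : Fin n := ⟨(j:ℕ)-1, by omega⟩ with hj2
    have hj2j : j2 + 1 = j := Fin.ext (by rw [fin_val_add_one j2 (by simp [hj2]; omega)]; simp [hj2]; omega)
    have hxj2 : x j2 = 1 := le_antisymm (hx1 j2)
      (by rw [← hxiv]; exact mono_val hmono (by simp [hj2]; omega))
    have hgj2 : gap x j2 = 0 := by
      rw [gap_eq_nowrap x j2 (by simp [hj2]; omega), hj2j, hxj, hxj2]; ring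
    exact absurd ⟨hgj2, by rw [hj2j]; exact hgj⟩ (hCz j2)
  · -- x i = x k - 1 : x k = 1, x i = 0
    have hxkv : x k = 1 := by linarith
    have hxiv : x i = 0 := by linarith
    have hik : (i:ℕ) < (k:ℕ) := by
      by_contra hc
      push_neg at hc
      have := mono_val hmono hc
      linarith
    have hKn : (k:ℕ) = n - 1 := by
      by_contra hc
      have hK2 : (k:ℕ)+1 < n := by omega
      have hxk1' : x (k+1) = 1 := le_antisymm (hx1 _)
        (by rw [← hxkv]; exact mono_val hmono (by rw [fin_val_add_one k hK2]; omega))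
      have hgk : gap x k = 0 := by rw [gap_eq_nowrap x k hK2, hxk1', hxkv]; ring
      have hgk1 : gap x (k+1) = 0 := by
        rcases Nat.lt_or_ge ((k:ℕ)+2) n with hK3 | hK3
        · have e1 : ((k+1 : Fin n):ℕ)+1 < n := by rw [fin_val_add_one k hK2]; omega
          have hxk2 : x (k+1+1) = 1 := le_antisymm (hx1 _)
            (by rw [← hxk1']; exact mono_val hmono (by rw [fin_val_add_one (k+1) e1]; omega))
          rw [gap_eq_nowrap x (k+1) e1, hxk2, hxk1']; ring
        · have e1 : ((k+1 : Fin n):ℕ)+1 = n := by rw [fin_val_add_one k hK2]; omega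
          rw [gap_eq_wrap x (k+1) e1, hx0, hxk1']; ring
      exact absurd ⟨hgk, hgk1⟩ (hCz k)
    have hK2' : (k:ℕ)+1 = n := by omega
    have hk10 : k + 1 = 0 := fin_add_one_wrap k hK2'
    have hgk : gap x k = 0 := by
      rw [gap_eq_wrap x k hK2', hx0, hxkv]; ring
    right; right
    refine ⟨hgk, ?_⟩
    by_contra hik1
    have hi0 : 1 ≤ (i:ℕ) := by
      rcases Nat.eq_zero_or_pos (i:ℕ) with h0 | h0
      · exact absurd (Fin.ext (by rw [hk10]; simp only [Fin.val_zero]; omega)) hik1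
      · exact h0
    have h1n : ((0:Fin n):ℕ)+1 < n := by simp only [Fin.val_zero]; omega
    have hx1v : x (0+1) = 0 := le_antisymm
      (by rw [← hxiv]; exact mono_val hmono (by rw [fin_val_add_one 0 h1n]; simp only [Fin.val_zero]; omega))
      (x_nonneg hx0 hmono _)
    have hg0 : gap x 0 = 0 := by rw [gap_eq_nowrap x 0 h1n, hx1v, hx0]; ring
    exact absurd ⟨hgk, by rw [hk10]; exact hg0⟩ (hCz k)

lemma cls_card {n : ℕ} [NeZero n] (hn : 2 ≤ n) (x : Fin n → ℝ) (hx0 : x 0 = 0)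
    (hmono : Monotone x) (hx1 : ∀ i, x i ≤ 1) (j k : Fin n) (hjk : k = j + 1)
    (hCz : ∀ j', ¬(gap x j' = 0 ∧ gap x (j'+1) = 0)) :
    ((cls x k).card : ℝ) = 1 + (if gap x j = 0 then 1 else 0)
      + (if gap x k = 0 then 1 else 0) := by
  have hkj : k ≠ j := fun hc => fin_ne_add_one hn j (by rw [← hjk, hc])
  have hkk1 : k ≠ k + 1 := fin_ne_add_one hn k
  have hsub : cls x k = insert k ((if gap x j = 0 then ({j} : Finset (Fin n)) else ∅)
      ∪ (if gap x k = 0 then ({k+1} : Finset (Fin n)) else ∅)) := by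
    apply Finset.ext
    intro i
    simp only [cls, Finset.mem_filter, Finset.mem_univ, true_and, Finset.mem_insert,
      Finset.mem_union]
    constructor
    · intro h
      rcases cls_structure hn x hx0 hmono hx1 j k hjk hCz i h with h1 | ⟨h1, h2⟩ | ⟨h1, h2⟩
      · exact Or.inl h1
      · right; left; rw [if_pos h1, h2]; exact Finset.mem_singleton_self j
      · right; right; rw [if_pos h1, h2]; exact Finset.mem_singleton_self _
    · intro h
      rcases h with rfl | h | h
      · exact ceq_refl _
      · split_ifs at h with hg
        · rw [Finset.mem_singleton] at h
          rw [h]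
          exact ceq_symm (by rw [hjk]; exact ceq_of_gap_zero j hg)
        · simp at h
      · split_ifs at h with hg
        · rw [Finset.mem_singleton] at h
          rw [h]
          exact ceq_of_gap_zero k hg
        · simp at h
  rw [hsub]
  by_cases hgj : gap x j = 0 <;> by_cases hgk : gap x k = 0
  · exact absurd ⟨hgj, by rw [← hjk]; exact hgk⟩ (hCz j)
  · rw [if_pos hgj, if_neg hgk, Finset.union_empty,
      Finset.card_insert_of_notMem (by simp [hkj]),
      Finset.card_singleton, if_pos hgj, if_neg hgk]
    norm_num
  · rw [if_neg hgj, if_pos hgk, Finset.empty_union,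
      Finset.card_insert_of_notMem (by simp [hkk1]),
      Finset.card_singleton, if_neg hgj, if_pos hgk]
    norm_num
  · rw [if_neg hgj, if_neg hgk, Finset.union_empty, if_neg hgj, if_neg hgk]
    simp

lemma free_core {n : ℕ} [NeZero n] (hn : 2 ≤ n) (x : Fin n → ℝ) (hx0 : x 0 = 0)
    (hmono : Monotone x) (hx1 : ∀ i, x i ≤ 1) (j k : Fin n) (hjk : k = j + 1)
    (A B : ℝ) (hA0 : 0 ≤ A) (hA1 : A < 1) (hAB : A < B) (hBA : B ≤ A + 1)
    (hfree : ∀ i, i ≠ k → x i ∉ Set.Ioo A B ∧ x i + 1 ∉ Set.Ioo A B) :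
    B - A ≤ max (maxGap x) (gap x j + gap x k) := by
  have havB : ∀ i, i ≠ k → A < x i → B ≤ x i := by
    intro i hik hgt
    have h1 := (hfree i hik).1
    rw [Set.mem_Ioo] at h1
    push_neg at h1
    exact h1 hgt
  have havB1 : ∀ i, i ≠ k → A < x i + 1 → B ≤ x i + 1 := by
    intro i hik hgt
    have h1 := (hfree i hik).2
    rw [Set.mem_Ioo] at h1
    push_neg at h1
    exact h1 hgt
  set S0 : Finset (Fin n) := Finset.univ.filter (fun i => x i ≤ A) with hS0
  have hS0ne : S0.Nonempty := ⟨0, by simp [hS0, hx0, hA0]⟩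
  set j0 := S0.max' hS0ne with hj0
  have hj0A : x j0 ≤ A := by
    have h2 : j0 ∈ S0 := S0.max'_mem hS0ne
    rw [hS0, Finset.mem_filter] at h2
    exact h2.2
  have habove : ∀ i : Fin n, (j0:ℕ) < (i:ℕ) → A < x i := by
    intro i hgt
    by_contra hc
    push_neg at hc
    have hmem : i ∈ S0 := by simp [hS0, hc]
    have h2 : i ≤ j0 := S0.le_max' i hmem
    have h3 : (i:ℕ) ≤ (j0:ℕ) := h2
    omega
  have hj0n := j0.isLt
  have hkn := k.isLt
  have hjn := j.isLt
  rcases Nat.lt_or_ge ((j0:ℕ)+1) n with hJ0 | hJ0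
  · -- case 1 : j0 not last
    have hj01v : ((j0+1 : Fin n):ℕ) = (j0:ℕ)+1 := fin_val_add_one j0 hJ0
    by_cases hj0k : j0 + 1 = k
    · -- j0 = j
      have hj0j : j0 = j := by
        have := hjk.symm.trans hj0k.symm
        exact add_right_cancel this.symm
      have hj0jv : (j0:ℕ) = (j:ℕ) := congrArg Fin.val hj0j
      rcases Nat.lt_or_ge ((k:ℕ)+1) n with hK2 | hK2
      · have hv : B ≤ x (k+1) := havB _ (fin_ne_add_one hn k).symm
          (habove _ (by rw [fin_val_add_one k hK2]
                        rcases succ_cases j k hjk with ⟨h1, h2⟩ | ⟨h1, h2⟩ <;> omega))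
        have hbound : x (k+1) - x j0 = gap x j + gap x k := by
          rw [hj0j, gap_eq_nowrap x k hK2, gap_eq_nowrap x j (by omega), ← hjk]
          ring
        refine le_trans (by linarith) (le_max_right _ _)
      · have hK2' : (k:ℕ)+1 = n := by omega
        have h0k : (0 : Fin n) ≠ k := by
          intro hc
          have : (k:ℕ) = 0 := by rw [← hc]; rfl
          omega
        have hv : B ≤ x 0 + 1 := havB1 _ h0k (by linarith [x_nonneg hx0 hmono (0:Fin n)])
        have hbound : x 0 + 1 - x j0 = gap x j + gap x k := by
          rw [hj0j, gap_eq_wrap x k hK2', gap_eq_nowrap x j (by omega), ← hjk]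
          ring
        refine le_trans (by linarith) (le_max_right _ _)
    · by_cases hj0k2 : j0 = k
      · -- j0 = k; u is x j or wrapped
        rcases succ_cases j k hjk with ⟨hJ, hKv⟩ | ⟨hJ, hKv⟩
        · -- j nonwrap: u = x j
          have hj0kv : (j0:ℕ) = (k:ℕ) := congrArg Fin.val hj0k2
          have hxjA : x j ≤ A := le_trans (mono_val hmono (by omega)) hj0A
          have hv : B ≤ x (j0+1) := havB _ hj0k (habove _ (by rw [hj01v]; omega))
          have hbound : x (j0+1) - x j = gap x j + gap x k := by
            rw [show j0 + 1 = k + 1 from by rw [hj0k2],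
              gap_eq_nowrap x k (by omega), gap_eq_nowrap x j hJ, ← hjk]
            ring
          refine le_trans (by linarith) (le_max_right _ _)
        · -- j wrap: K = 0, j0 = k = 0, u = x j - 1
          have hj0kv : (j0:ℕ) = (k:ℕ) := congrArg Fin.val hj0k2
          have hxjA : x j - 1 ≤ A := by linarith [hx1 j]
          have hv : B ≤ x (j0+1) := havB _ hj0k (habove _ (by rw [hj01v]; omega))
          have hx0k : x 0 = x k := by
            rw [show (0:Fin n) = k from Fin.ext (by simp only [Fin.val_zero]; omega)]
          have hbound : x (j0+1) - (x j - 1) = gap x j + gap x k := by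
            rw [show j0 + 1 = k + 1 from by rw [hj0k2],
              gap_eq_nowrap x k (by omega), gap_eq_wrap x j hJ, hx0k]
            ring
          refine le_trans (by linarith) (le_max_right _ _)
      · -- generic: single gap
        have hv : B ≤ x (j0+1) := havB _ hj0k (habove _ (by rw [hj01v]; omega))
        have hbound : x (j0+1) - x j0 = gap x j0 := (gap_eq_nowrap x j0 hJ0).symm
        refine le_trans (by linarith) (le_trans (maxGap_ge j0) (le_max_left _ _))
  · -- case 2 : j0 is last, all x i ≤ A
    have hJ0' : (j0:ℕ)+1 = n := by omega
    have hall : ∀ i, x i ≤ A := fun i => le_trans (mono_val hmono (by omega)) hj0A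
    by_cases hk0 : k = 0
    · -- k = 0 : j = last, v = x (k+1) + 1
      have hk0v : (k:ℕ) = 0 := by rw [hk0]; rfl
      have hjlast : (j:ℕ)+1 = n := by
        rcases succ_cases j k hjk with ⟨h1, h2⟩ | ⟨h1, h2⟩ <;> omega
      have hK2 : (k:ℕ)+1 < n := by omega
      have hk1k : k + 1 ≠ k := (fin_ne_add_one hn k).symm
      have hv : B ≤ x (k+1) + 1 := havB1 _ hk1k
        (by linarith [x_nonneg hx0 hmono (k+1)])
      have hx0k : x 0 = x k := by rw [hk0]
      have hbound : x (k+1) + 1 - x j = gap x j + gap x k := by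
        rw [gap_eq_nowrap x k hK2, gap_eq_wrap x j hjlast, hx0k]
        ring
      refine le_trans (by linarith [hall j]) (le_max_right _ _)
    · by_cases hkl : k = j0
      · -- k last: u = x j, v = x 0 + 1
        have hklv : (k:ℕ) = (j0:ℕ) := congrArg Fin.val hkl
        have hKv : (k:ℕ) = (j:ℕ)+1 := by
          rcases succ_cases j k hjk with ⟨h1, h2⟩ | ⟨h1, h2⟩
          · exact h2
          · exfalso; apply hk0; exact Fin.ext (by simp only [Fin.val_zero]; omega)
        have h0k : (0 : Fin n) ≠ k := fun hc => hk0 hc.symm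
        have hv : B ≤ x 0 + 1 := havB1 _ h0k (by linarith [x_nonneg hx0 hmono (0:Fin n)])
        have hbound : x 0 + 1 - x j = gap x j + gap x k := by
          rw [gap_eq_wrap x k (by omega), gap_eq_nowrap x j (by omega), ← hjk]
          ring
        refine le_trans (by linarith [hall j]) (le_max_right _ _)
      · -- generic wrap gap
        have h0k : (0 : Fin n) ≠ k := by
          intro hc; exact hk0 hc.symm
        have hv : B ≤ x 0 + 1 := havB1 _ h0k (by linarith [x_nonneg hx0 hmono (0:Fin n)])
        have hbound : x 0 + 1 - x j0 = gap x j0 := by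
          rw [gap_eq_wrap x j0 hJ0']
          ring
        refine le_trans (by linarith [hall j0]) (le_trans (maxGap_ge j0) (le_max_left _ _))

lemma free_arc {n : ℕ} [NeZero n] (hn : 2 ≤ n) (x : Fin n → ℝ) (hx0 : x 0 = 0)
    (hmono : Monotone x) (hx1 : ∀ i, x i ≤ 1) (j k : Fin n) (hjk : k = j + 1)
    (A B : ℝ) (hA : -1 < A) (hB : B < 2) (hAB : A < B)
    (hfree : ∀ i, i ≠ k → ∀ r, (r = x i ∨ r = x i + 1 ∨ r = x i - 1) → r ∉ Set.Ioo A B) :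
    B - A ≤ max (maxGap x) (gap x j + gap x k) := by
  have hL : B - A ≤ 1 := by
    by_contra hL
    push_neg at hL
    set i := k + 1 with hi
    have hik : i ≠ k := (fin_ne_add_one hn k).symm
    have hxi0 := x_nonneg hx0 hmono i
    have hxi1 := hx1 i
    have hA1 : A < 1 := by linarith
    rcases le_or_gt (x i) A with hc | hc
    · exact hfree i hik (x i + 1) (Or.inr (Or.inl rfl))
        (Set.mem_Ioo.mpr ⟨by linarith, by linarith⟩)
    · rcases le_or_gt (x i - 1) A with hc2 | hc2
      · exact hfree i hik (x i) (Or.inl rfl) (Set.mem_Ioo.mpr ⟨hc, by linarith⟩)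
      · exact hfree i hik (x i - 1) (Or.inr (Or.inr rfl))
          (Set.mem_Ioo.mpr ⟨hc2, by linarith⟩)
  rcases lt_or_ge A 0 with hA0 | hA0
  · have hcore := free_core hn x hx0 hmono hx1 j k hjk (A+1) (B+1) (by linarith)
      (by linarith) (by linarith) (by linarith) (by
        intro i hik
        constructor
        · intro hc
          rw [Set.mem_Ioo] at hc
          exact hfree i hik (x i - 1) (Or.inr (Or.inr rfl))
            (Set.mem_Ioo.mpr ⟨by linarith, by linarith⟩)
        · intro hc
          rw [Set.mem_Ioo] at hc
          exact hfree i hik (x i) (Or.inl rfl)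
            (Set.mem_Ioo.mpr ⟨by linarith, by linarith⟩))
    linarith
  · rcases lt_or_ge A 1 with hA1 | hA1
    · exact free_core hn x hx0 hmono hx1 j k hjk A B hA0 hA1 hAB (by linarith)
        (fun i hik => ⟨hfree i hik (x i) (Or.inl rfl),
          hfree i hik (x i + 1) (Or.inr (Or.inl rfl))⟩)
    · have hcore := free_core hn x hx0 hmono hx1 j k hjk (A-1) (B-1) (by linarith)
        (by linarith) (by linarith) (by linarith) (by
          intro i hik
          constructor
          · intro hc
            rw [Set.mem_Ioo] at hc
            exact hfree i hik (x i + 1) (Or.inr (Or.inl rfl))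
              (Set.mem_Ioo.mpr ⟨by linarith, by linarith⟩)
          · intro hc
            rw [Set.mem_Ioo] at hc
            have := x_nonneg hx0 hmono i
            linarith [hc.2])
      linarith

lemma nbr {n : ℕ} [NeZero n] (ξ : Fin n → ℝ) (hξ : ∀ i, ξ i ∈ Icc (0:ℝ) 1) (k : Fin n)
    (hne : ∃ i, ¬ ceq (ξ i) (ξ k)) :
    ∃ ra rb, 0 < ra ∧ ra < 1 ∧ 0 < rb ∧ rb < 1 ∧
      (∃ i, ξ i - ξ k = rb ∨ ξ i - ξ k = rb - 1) ∧
      (∃ i, ξ k - ξ i = ra ∨ ξ k - ξ i = ra - 1) ∧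
      (∀ i, ceq (ξ i) (ξ k) ∨ ∃ d, rb ≤ d ∧ d ≤ 1 - ra ∧
        (ξ i - ξ k = d ∨ ξ i - ξ k = d - 1)) ∧
      (∀ i r, (r = ξ i ∨ r = ξ i + 1 ∨ r = ξ i - 1) →
        r ∉ Set.Ioo (ξ k) (ξ k + rb) ∧ r ∉ Set.Ioo (ξ k - ra) (ξ k)) := by
  classical
  set p := ξ k with hp
  have hp0 := (hξ k).1
  have hp1 := (hξ k).2
  set D : Fin n → ℝ := fun i => if p < ξ i then ξ i - p else ξ i - p + 1 with hD
  set T : Finset (Fin n) := Finset.univ.filter (fun i => ¬ ceq (ξ i) p) with hT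
  have hTne : T.Nonempty := by
    obtain ⟨i, hi⟩ := hne
    exact ⟨i, by simp [hT, hi]⟩
  have hDmem : ∀ i ∈ T, 0 < D i ∧ D i < 1 := by
    intro i hi
    rw [hT, Finset.mem_filter] at hi
    have hic := hi.2
    have h0 := (hξ i).1
    have h1 := (hξ i).2
    rw [hD]
    simp only
    split_ifs with hlt
    · constructor
      · linarith
      · rcases lt_or_eq_of_le (show ξ i - p ≤ 1 by linarith) with h | h
        · exact h
        · exact absurd (Or.inr (Or.inl (by linarith))) hic
    · push_neg at hlt
      have hne2 : ξ i ≠ p := fun hc => hic (Or.inl hc)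
      constructor
      · rcases lt_or_eq_of_le (show -1 ≤ ξ i - p by linarith) with h | h
        · linarith
        · exact absurd (Or.inr (Or.inr (by linarith))) hic
      · have : ξ i < p := lt_of_le_of_ne hlt hne2
        linarith
  set DT : Finset ℝ := T.image D with hDT
  have hDTne : DT.Nonempty := hTne.image D
  set rb := DT.min' hDTne with hrb
  set mx := DT.max' hDTne with hmx
  set ra := 1 - mx with hra
  obtain ⟨ib, hibT, hibD⟩ : ∃ i ∈ T, D i = rb := by
    have h2 : rb ∈ DT := DT.min'_mem hDTne
    rw [hDT] at h2
    simpa using h2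
  obtain ⟨ia, hiaT, hiaD⟩ : ∃ i ∈ T, D i = mx := by
    have h2 : mx ∈ DT := DT.max'_mem hDTne
    rw [hDT] at h2
    simpa using h2
  have hrb01 : 0 < rb ∧ rb < 1 := hibD ▸ hDmem ib hibT
  have hmx01 : 0 < mx ∧ mx < 1 := hiaD ▸ hDmem ia hiaT
  have hDge : ∀ i ∈ T, rb ≤ D i := by
    intro i hi
    exact DT.min'_le (D i) (Finset.mem_image_of_mem D hi)
  have hDle : ∀ i ∈ T, D i ≤ mx := by
    intro i hi
    exact DT.le_max' (D i) (Finset.mem_image_of_mem D hi)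
  refine ⟨ra, rb, by rw [hra]; linarith [hmx01.2], by rw [hra]; linarith [hmx01.1],
    hrb01.1, hrb01.2, ?_, ?_, ?_, ?_⟩
  · refine ⟨ib, ?_⟩
    rw [← hibD, hD]
    simp only
    split_ifs
    · exact Or.inl rfl
    · exact Or.inr (by ring)
  · refine ⟨ia, ?_⟩
    have : D ia = 1 - ra := by rw [hra, ← hiaD]; ring
    rw [hD] at this
    simp only at this
    split_ifs at this
    · exact Or.inr (by linarith)
    · exact Or.inl (by linarith)
  · intro i
    by_cases hic : ceq (ξ i) p
    · exact Or.inl hic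
    · have hiT : i ∈ T := by simp [hT, hic]
      refine Or.inr ⟨D i, hDge i hiT, by rw [hra]; linarith [hDle i hiT], ?_⟩
      rw [hD]
      simp only
      split_ifs
      · exact Or.inl rfl
      · exact Or.inr (by ring)
  · intro i r hrep
    have h0 := (hξ i).1
    have h1 := (hξ i).2
    constructor
    · intro hc
      rw [Set.mem_Ioo] at hc
      by_cases hic : ceq (ξ i) p
      · rcases hic with h | h | h <;> rcases hrep with rfl | rfl | rfl <;>
          rw [h] at hc <;> linarith [hc.1, hc.2, hrb01.1, hrb01.2]
      · have hiT : i ∈ T := by simp [hT, hic]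
        have hge := hDge i hiT
        have hlt1 := (hDmem i hiT).2
        rcases hrep with rfl | rfl | rfl
        · have hgt : p < ξ i := hc.1
          simp only [hD, if_pos hgt] at hge hlt1
          linarith [hc.2]
        · have hlt : ¬ p < ξ i := by intro hlt; linarith [hc.2, hrb01.2]
          simp only [hD, if_neg hlt] at hge hlt1
          linarith [hc.2]
        · have hgt : p < ξ i := by linarith [hc.1]
          simp only [hD, if_pos hgt] at hge hlt1
          linarith [hc.1]
    · intro hc
      rw [Set.mem_Ioo] at hc
      by_cases hic : ceq (ξ i) p
      · rcases hic with h | h | h <;> rcases hrep with rfl | rfl | rfl <;>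
          rw [h] at hc <;> linarith [hc.1, hc.2, hmx01.1, hmx01.2]
      · have hiT : i ∈ T := by simp [hT, hic]
        have hle := hDle i hiT
        rcases hrep with rfl | rfl | rfl
        · have hlt : ¬ p < ξ i := by intro h; linarith [hc.2]
          simp only [hD, if_neg hlt] at hle
          linarith [hc.1, hle, hra]
        · linarith [hc.2]
        · have hgt : p < ξ i := by linarith [hc.1]
          simp only [hD, if_pos hgt] at hle
          linarith [hc.1, hle, hra]

lemma fin_ne_add_two {n : ℕ} [NeZero n] (hn3 : 3 ≤ n) (k : Fin n) : k + 1 + 1 ≠ k := by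
  intro hc
  have hkn := k.isLt
  rcases Nat.lt_or_ge ((k:ℕ)+1) n with h1 | h1
  · have e1 : ((k+1 : Fin n):ℕ) = (k:ℕ)+1 := fin_val_add_one k h1
    rcases Nat.lt_or_ge ((k:ℕ)+2) n with h2 | h2
    · have e2 : ((k+1+1 : Fin n):ℕ) = (k:ℕ)+2 := by
        rw [fin_val_add_one (k+1) (by omega)]
        omega
      have := congrArg Fin.val hc
      omega
    · have e2 : k+1+1 = 0 := fin_add_one_wrap (k+1) (by omega)
      rw [e2] at hc
      have := congrArg Fin.val hc
      simp only [Fin.val_zero] at this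
      omega
  · have e1 : k + 1 = 0 := fin_add_one_wrap k (by omega)
    rw [e1] at hc
    have e2 : ((0+1 : Fin n):ℕ) = 1 := by
      rw [fin_val_add_one 0 (by simp only [Fin.val_zero]; omega)]
      simp
    have := congrArg Fin.val hc
    omega

lemma dev_ge {n : ℕ} [NeZero n] (hn : 2 ≤ n) (x : Fin n → ℝ) (hx0 : x 0 = 0)
    (hmono : Monotone x) (hx1 : ∀ i, x i ≤ 1) (k : Fin n) :
    ∃ μ ∈ Icc (0:ℝ) 1, maxGap x / 2 ≤ profit k (Function.update x k μ) := by
  obtain ⟨l, hl⟩ := maxGap_exists x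
  have hM0 : 0 < maxGap x := maxGap_pos hx0
  have hM1 : maxGap x ≤ 1 := maxGap_le_one hx0 hmono hx1
  have hxl0 := x_nonneg hx0 hmono l
  have hxl1 := hx1 l
  obtain ⟨N, hNval, hNfree, hN1⟩ : ∃ N, N = x l + maxGap x ∧
      (∀ i, i ≠ k → (x i ≤ x l ∨ N ≤ x i)) ∧ N ≤ 1 := by
    rcases Nat.lt_or_ge ((l:ℕ)+1) n with h | h
    · refine ⟨x (l+1), by rw [hl, gap_eq_nowrap x l h]; ring, ?_, hx1 _⟩
      intro i hik
      rcases le_or_gt (i:ℕ) (l:ℕ) with h2 | h2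
      · exact Or.inl (mono_val hmono h2)
      · exact Or.inr (mono_val hmono (by rw [fin_val_add_one l h]; omega))
    · refine ⟨1, by rw [hl, gap_eq_wrap x l (by omega), hx0]; ring, ?_, le_refl 1⟩
      intro i hik
      exact Or.inl (mono_val hmono (by have := i.isLt; omega))
  set M := maxGap x with hM
  set μ := x l + M/2 with hμ
  have hμl : x l < μ := by rw [hμ]; linarith
  have hμN : μ < N := by rw [hμ, hNval]; linarith
  have hμ0 : 0 ≤ μ := by linarith
  have hμ1 : μ ≤ 1 := by linarith
  refine ⟨μ, ⟨hμ0, hμ1⟩, ?_⟩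
  set ξ := Function.update x k μ with hξdef
  have hξk : ξ k = μ := Function.update_self k μ x
  have hξi : ∀ i, i ≠ k → ξ i = x i := fun i hik => Function.update_of_ne hik μ x
  have hξmem : ∀ i, ξ i ∈ Icc (0:ℝ) 1 := by
    intro i
    by_cases hik : i = k
    · rw [hik, hξk]; exact ⟨hμ0, hμ1⟩
    · rw [hξi i hik]; exact ⟨x_nonneg hx0 hmono i, hx1 i⟩
  have hsep : ∀ i, ceq (ξ i) (ξ k) ∨ ∃ d, M/2 ≤ d ∧ d ≤ 1 - M/2 ∧
      (ξ i - ξ k = d ∨ ξ i - ξ k = d - 1) := by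
    intro i
    by_cases hik : i = k
    · rw [hik]; exact Or.inl (ceq_refl _)
    · rw [hξi i hik, hξk]
      have hxi0 := x_nonneg hx0 hmono i
      have hxi1 := hx1 i
      rcases hNfree i hik with hle | hge
      · exact Or.inr ⟨x i - μ + 1, by rw [hμ]; rw [hNval] at hN1; linarith,
          by rw [hμ]; linarith, Or.inr (by ring)⟩
      · exact Or.inr ⟨x i - μ, by rw [hμ]; rw [hNval] at hge; linarith,
          by rw [hμ]; linarith, Or.inl rfl⟩
  have hcls : cls ξ k = {k} := by
    apply Finset.ext
    intro i
    simp only [cls, Finset.mem_filter, Finset.mem_univ, true_and, Finset.mem_singleton]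
    constructor
    · intro h
      by_contra hik
      rw [hξi i hik, hξk] at h
      have hxi0 := x_nonneg hx0 hmono i
      have hxi1 := hx1 i
      rcases hNfree i hik with hle | hge <;> rcases h with h | h | h <;> linarith
    · rintro rfl
      exact ceq_refl _
  have h := profit_ge ξ k hξmem (ra := M/2) (rb := M/2) (by linarith) (by linarith)
    (by linarith) (by linarith)
    (by first
        | exact hsep
        | · rw [hξk] at hsep
            exact hsep
        | · rw [← hξk] at hsep
            exact hsep)
  rw [hcls, Finset.card_singleton] at h
  calc M/2 = (M/2 + M/2) / (2 * ((1:ℕ):ℝ)) := by push_cast; ring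
    _ ≤ profit k ξ := h

lemma profit_x_ge {n : ℕ} [NeZero n] (hn : 2 ≤ n) (x : Fin n → ℝ) (hx0 : x 0 = 0)
    (hmono : Monotone x) (hx1 : ∀ i, x i ≤ 1)
    (hC : ∀ j', maxGap x ≤ gap x j' + gap x (j'+1)) (j2 j k : Fin n)
    (hj : j = j2 + 1) (hjk : k = j + 1) :
    (gap x j + gap x k) / 2 ≤ profit k x := by
  have hM0 : 0 < maxGap x := maxGap_pos hx0
  have hCz : ∀ j', ¬(gap x j' = 0 ∧ gap x (j'+1) = 0) := by
    rintro j' ⟨h1, h2⟩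
    have := hC j'
    rw [h1, h2] at this
    linarith
  have hξmem : ∀ i, x i ∈ Icc (0:ℝ) 1 := fun i => ⟨x_nonneg hx0 hmono i, hx1 i⟩
  have hcard := cls_card hn x hx0 hmono hx1 j k hjk hCz
  have hCj := hC j
  rw [← hjk] at hCj
  by_cases hgk : gap x k = 0
  · have hgj : gap x j ≠ 0 := fun hc => hCz j ⟨hc, by rw [← hjk]; exact hgk⟩
    have hgjM : gap x j = maxGap x := le_antisymm (maxGap_ge j) (by rw [hgk] at hCj; linarith)
    have hgk1M : gap x (k+1) = maxGap x := le_antisymm (maxGap_ge _)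
      (by have := hC k; rw [hgk] at this; linarith)
    have hsep : ∀ i, ceq (x i) (x k) ∨ ∃ d, gap x k + gap x (k+1) ≤ d ∧
        d ≤ 1 - gap x j ∧ (x i - x k = d ∨ x i - x k = d - 1) := by
      intro i
      by_cases hic : ceq (x i) (x k)
      · exact Or.inl hic
      · exact Or.inr (sep_right hn x hx0 hmono hx1 j k hjk hgk i hic)
    have h := profit_ge x k hξmem (ra := gap x j) (rb := gap x k + gap x (k+1))
      (by rw [hgjM]; exact hM0) (gap_le_one hx0 hmono hx1 j)
      (by rw [hgk, hgk1M]; linarith)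
      (two_gap_le_one hx0 hmono hx1 (fin_ne_add_one hn k)) hsep
    have hc2 : ((cls x k).card : ℝ) = 2 := by
      rw [hcard, if_neg hgj, if_pos hgk]; norm_num
    rw [hc2, hgjM, hgk, hgk1M] at h
    rw [hgjM, hgk]
    linarith
  · by_cases hgj : gap x j = 0
    · have hgj2 : gap x j2 ≠ 0 := fun hc => hCz j2 ⟨hc, by rw [← hj]; exact hgj⟩
      have hCj2 := hC j2
      rw [← hj] at hCj2
      have hgj2M : gap x j2 = maxGap x := le_antisymm (maxGap_ge j2)
        (by rw [hgj] at hCj2; linarith)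
      have hgkM : gap x k = maxGap x := le_antisymm (maxGap_ge k)
        (by rw [hgj] at hCj; linarith)
      have hsep : ∀ i, ceq (x i) (x k) ∨ ∃ d, gap x k ≤ d ∧
          d ≤ 1 - (gap x j2 + gap x j) ∧ (x i - x k = d ∨ x i - x k = d - 1) := by
        intro i
        by_cases hic : ceq (x i) (x k)
        · exact Or.inl hic
        · exact Or.inr (sep_left hn x hx0 hmono hx1 j2 j k hj hjk hgj i hic)
      have h := profit_ge x k hξmem (ra := gap x j2 + gap x j) (rb := gap x k)
        (by rw [hgj2M, hgj]; linarith)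
        (two_gap_le_one hx0 hmono hx1 (fun hc => fin_ne_add_one hn j2 (by rw [← hj, hc])))
        (by rw [hgkM]; exact hM0) (gap_le_one hx0 hmono hx1 k) hsep
      have hc2 : ((cls x k).card : ℝ) = 2 := by
        rw [hcard, if_pos hgj, if_neg hgk]; norm_num
      rw [hc2, hgj2M, hgj, hgkM] at h
      rw [hgj, hgkM]
      linarith
    · have hsep : ∀ i, ceq (x i) (x k) ∨ ∃ d, gap x k ≤ d ∧
          d ≤ 1 - gap x j ∧ (x i - x k = d ∨ x i - x k = d - 1) := by
        intro i
        by_cases hic : ceq (x i) (x k)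
        · exact Or.inl hic
        · exact Or.inr (sep_basic hn x hx0 hmono hx1 j k hjk i hic)
      have h := profit_ge x k hξmem (ra := gap x j) (rb := gap x k)
        (lt_of_le_of_ne (gap_nonneg hx0 hmono hx1 j) (Ne.symm hgj))
        (gap_le_one hx0 hmono hx1 j)
        (lt_of_le_of_ne (gap_nonneg hx0 hmono hx1 k) (Ne.symm hgk))
        (gap_le_one hx0 hmono hx1 k) hsep
      have hc1 : ((cls x k).card : ℝ) = 1 := by
        rw [hcard, if_neg hgj, if_neg hgk]; norm_num
      rw [hc1] at h
      linarith

lemma dev_bound {n : ℕ} [NeZero n] (hn : 2 ≤ n) (x : Fin n → ℝ) (hx0 : x 0 = 0)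
    (hmono : Monotone x) (hx1 : ∀ i, x i ≤ 1)
    (hC : ∀ j', maxGap x ≤ gap x j' + gap x (j'+1)) (j k : Fin n) (hjk : k = j + 1)
    (x' : ℝ) (hx' : x' ∈ Icc (0:ℝ) 1) :
    profit k (Function.update x k x') ≤ (gap x j + gap x k) / 2 := by
  have hM0 : 0 < maxGap x := maxGap_pos hx0
  have hMle : maxGap x ≤ gap x j + gap x k := by
    have := hC j
    rw [← hjk] at this
    exact this
  have hGnn : 0 < gap x j + gap x k := lt_of_lt_of_le hM0 hMle
  set ξ := Function.update x k x' with hξdef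
  have hξk : ξ k = x' := Function.update_self k x' x
  have hξi : ∀ i, i ≠ k → ξ i = x i := fun i hik => Function.update_of_ne hik x' x
  have hξmem : ∀ i, ξ i ∈ Icc (0:ℝ) 1 := by
    intro i
    by_cases hik : i = k
    · rw [hik, hξk]; exact hx'
    · rw [hξi i hik]; exact ⟨x_nonneg hx0 hmono i, hx1 i⟩
  have hp0 : 0 ≤ ξ k := (hξmem k).1
  have hp1 : ξ k ≤ 1 := (hξmem k).2
  by_cases hall : ∀ i, ceq (ξ i) (ξ k)
  · rw [profit_all_ceq ξ k hξmem hall]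
    have hn' : (2:ℝ) ≤ (n:ℝ) := by exact_mod_cast hn
    have h1n : (1:ℝ)/n ≤ 1/2 := by
      apply one_div_le_one_div_of_le <;> linarith
    by_cases hone : ∃ j'', j'' ≠ j ∧ j'' ≠ k ∧ gap x j'' ≠ 0
    · obtain ⟨j'', hj1, hj2, hj3⟩ := hone
      have hj1' : j'' + 1 ≠ k := by
        intro hc
        exact hj1 (add_right_cancel (hc.trans hjk))
      have hceq : ceq (x (j''+1)) (x j'') := by
        have h1 := hall j''
        have h2 := hall (j''+1)
        rw [hξi j'' hj2] at h1
        rw [hξi (j''+1) hj1'] at h2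
        exact ceq_trans' ⟨x_nonneg hx0 hmono (j''+1), hx1 (j''+1)⟩ (hξmem k)
          ⟨x_nonneg hx0 hmono j'', hx1 j''⟩ h2 (ceq_symm h1)
      rcases gap_01_of_ceq hx0 hmono hx1 j'' hceq with h | h
      · exact absurd h hj3
      · have : (1:ℝ) ≤ gap x j + gap x k :=
          le_trans (le_trans (le_of_eq h.symm) (maxGap_ge j'')) hMle
        linarith
    · push_neg at hone
      have hjk' : j ≠ k := fun hc => fin_ne_add_one hn j (hc.trans hjk)
      have hsum : gap x j + gap x k = 1 := by
        rw [← sum_gap (x := x) hx0, ← Finset.sum_pair hjk']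
        apply Finset.sum_subset (Finset.subset_univ _)
        intro i _ hni
        simp only [Finset.mem_insert, Finset.mem_singleton, not_or] at hni
        exact hone i hni.1 hni.2
      linarith
  · push_neg at hall
    obtain ⟨i0, hi0⟩ := hall
    obtain ⟨ra, rb, hra0, hra1, hrb0, hrb1, hbex, haex, hsep, hfree⟩ :=
      nbr ξ hξmem k ⟨i0, hi0⟩
    have hub := profit_le ξ k hξmem hra0 hra1 hrb0 hrb1 hbex haex
    have hmax : max (maxGap x) (gap x j + gap x k) = gap x j + gap x k := max_eq_right hMle
    have hcard1 : 0 < (cls ξ k).card := Finset.card_pos.mpr ⟨k, mem_cls_self ξ k⟩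
    have hfree' : ∀ i, i ≠ k → ∀ r, (r = x i ∨ r = x i + 1 ∨ r = x i - 1) →
        r ∉ Set.Ioo (ξ k) (ξ k + rb) ∧ r ∉ Set.Ioo (ξ k - ra) (ξ k) := by
      intro i hik r hrep
      apply hfree i r
      rw [hξi i hik]
      exact hrep
    by_cases hm : (cls ξ k).card = 1
    · have harc : ra + rb ≤ gap x j + gap x k := by
        have h := free_arc hn x hx0 hmono hx1 j k hjk (ξ k - ra) (ξ k + rb)
          (by linarith) (by linarith) (by linarith) ?_
        · rw [hmax] at h; linarith
        · intro i hik r hrep hmem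
          rw [Set.mem_Ioo] at hmem
          rcases lt_trichotomy r (ξ k) with h1 | h1 | h1
          · exact (hfree' i hik r hrep).2 (Set.mem_Ioo.mpr ⟨hmem.1, h1⟩)
          · -- r = ξ k: i is circle-equal to k, contradicting card = 1
            have hceq : ceq (ξ i) (ξ k) := by
              rw [hξi i hik]
              rcases hrep with h2 | h2 | h2
              · exact Or.inl (by rw [← h1, ← h2])
              · exact Or.inr (Or.inr (by rw [← h1]; linarith [h2]))
              · exact Or.inr (Or.inl (by rw [← h1]; linarith [h2]))
            have hsub2 : ({i, k} : Finset (Fin n)) ⊆ cls ξ k := by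
              intro z hz
              simp only [Finset.mem_insert, Finset.mem_singleton] at hz
              rcases hz with h | h
              · rw [h]; exact Finset.mem_filter.mpr ⟨Finset.mem_univ _, hceq⟩
              · rw [h]; exact mem_cls_self ξ k
            have := Finset.card_le_card hsub2
            rw [Finset.card_insert_of_notMem (by simp [hik]), Finset.card_singleton] at this
            omega
          · exact (hfree' i hik r hrep).1 (Set.mem_Ioo.mpr ⟨h1, hmem.2⟩)
      calc profit k ξ ≤ (ra + rb) / (2 * ((cls ξ k).card : ℝ)) := hub
        _ = (ra + rb) / 2 := by rw [hm]; norm_num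
        _ ≤ (gap x j + gap x k) / 2 := by linarith
    · have hm2 : (2:ℝ) ≤ ((cls ξ k).card : ℝ) := by
        have : 2 ≤ (cls ξ k).card := by omega
        exact_mod_cast this
      have hrbG : rb ≤ gap x j + gap x k := by
        have h := free_arc hn x hx0 hmono hx1 j k hjk (ξ k) (ξ k + rb)
          (by linarith) (by linarith) (by linarith)
          (fun i hik r hrep hmem => (hfree' i hik r hrep).1 hmem)
        rw [hmax] at h; linarith
      have hraG : ra ≤ gap x j + gap x k := by
        have h := free_arc hn x hx0 hmono hx1 j k hjk (ξ k - ra) (ξ k)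
          (by linarith) (by linarith) (by linarith)
          (fun i hik r hrep hmem => (hfree' i hik r hrep).2 hmem)
        rw [hmax] at h; linarith
      have hcard1' : (0:ℝ) < ((cls ξ k).card : ℝ) := by exact_mod_cast hcard1
      calc profit k ξ ≤ (ra + rb) / (2 * ((cls ξ k).card : ℝ)) := hub
        _ ≤ (gap x j + gap x k) / 2 := by
            rw [div_le_div_iff₀ (by linarith) (by norm_num)]
            nlinarith

lemma profit_x_lt {n : ℕ} [NeZero n] (hn3 : 3 ≤ n) (x : Fin n → ℝ) (hx0 : x 0 = 0)
    (hmono : Monotone x) (hx1 : ∀ i, x i ≤ 1) (j k : Fin n) (hjk : k = j + 1)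
    (hfail : gap x j + gap x k < maxGap x) :
    profit k x < maxGap x / 2 := by
  have hn : 2 ≤ n := by omega
  have hM0 : 0 < maxGap x := maxGap_pos hx0
  have hM1 : maxGap x ≤ 1 := maxGap_le_one hx0 hmono hx1
  have hξmem : ∀ i, x i ∈ Icc (0:ℝ) 1 := fun i => ⟨x_nonneg hx0 hmono i, hx1 i⟩
  have hgj0 := gap_nonneg hx0 hmono hx1 j
  have hgk0 := gap_nonneg hx0 hmono hx1 k
  by_cases hall : ∀ i, ceq (x i) (x k)
  · rw [profit_all_ceq x k hξmem hall]
    have h01 : ∀ i, x i = 0 ∨ x i = 1 := by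
      intro i
      have h1 := ceq_trans' (hξmem i) (hξmem k) (hξmem 0) (hall i) (ceq_symm (hall 0))
      have hi0 := x_nonneg hx0 hmono i
      have hi1 := hx1 i
      rcases h1 with h | h | h
      · exact Or.inl (by rw [h, hx0])
      · exact Or.inr (by rw [h, hx0]; ring)
      · exfalso; rw [hx0] at h; linarith
    have hM1' : (1:ℝ) ≤ maxGap x := by
      set S1 : Finset (Fin n) := Finset.univ.filter (fun i => x i = 0) with hS1
      have hS1ne : S1.Nonempty := ⟨0, by simp [hS1, hx0]⟩
      set j0 := S1.max' hS1ne with hj0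
      have hj0v : x j0 = 0 := by
        have h2 : j0 ∈ S1 := S1.max'_mem hS1ne
        rw [hS1, Finset.mem_filter] at h2
        exact h2.2
      rcases Nat.lt_or_ge ((j0:ℕ)+1) n with hw | hw
      · have hnm : x (j0+1) = 1 := by
          rcases h01 (j0+1) with h | h
          · exfalso
            have hmem : j0+1 ∈ S1 := by simp [hS1, h]
            have h3 : ((j0+1:Fin n):ℕ) ≤ (j0:ℕ) := S1.le_max' _ hmem
            rw [fin_val_add_one j0 hw] at h3
            omega
          · exact h
        have : gap x j0 = 1 := by rw [gap_eq_nowrap x j0 hw, hnm, hj0v]; ring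
        rw [← this]
        exact maxGap_ge j0
      · have : gap x j0 = 1 := by
          rw [gap_eq_wrap x j0 (by omega), hx0, hj0v]; ring
        rw [← this]
        exact maxGap_ge j0
    have hn' : (3:ℝ) ≤ (n:ℝ) := by exact_mod_cast hn3
    have hn0 : (0:ℝ) < (n:ℝ) := by linarith
    have : (1:ℝ)/n ≤ 1/3 := by
      apply one_div_le_one_div_of_le <;> linarith
    linarith
  · push_neg at hall
    obtain ⟨i0, hi0⟩ := hall
    obtain ⟨ra, rb, hra0, hra1, hrb0, hrb1, hbex, haex, hsep, hfree⟩ :=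
      nbr x hξmem k ⟨i0, hi0⟩
    have hcard1 : 0 < (cls x k).card := Finset.card_pos.mpr ⟨k, mem_cls_self x k⟩
    have hcard1' : (0:ℝ) < ((cls x k).card : ℝ) := by exact_mod_cast hcard1
    have hmax : max (maxGap x) (gap x j + gap x k) = maxGap x := max_eq_left hfail.le
    have hp0 := (hξmem k).1
    have hp1 := (hξmem k).2
    have hrbM : rb ≤ maxGap x := by
      have h := free_arc hn x hx0 hmono hx1 j k hjk (x k) (x k + rb)
        (by linarith) (by linarith) (by linarith)
        (fun i hik r hrep hmem => (hfree i r hrep).1 hmem)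
      rw [hmax] at h; linarith
    have hraM : ra ≤ maxGap x := by
      have h := free_arc hn x hx0 hmono hx1 j k hjk (x k - ra) (x k)
        (by linarith) (by linarith) (by linarith)
        (fun i hik r hrep hmem => (hfree i r hrep).2 hmem)
      rw [hmax] at h; linarith
    have hub := profit_le x k hξmem hra0 hra1 hrb0 hrb1 hbex haex
    by_cases hgk : gap x k = 0
    · by_cases hgj : gap x j = 0
      · -- m ≥ 3
        have hjmem : j ∈ cls x k := Finset.mem_filter.mpr ⟨Finset.mem_univ _,
          ceq_symm (by rw [hjk]; exact ceq_of_gap_zero j hgj)⟩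
        have hk1mem : k+1 ∈ cls x k := Finset.mem_filter.mpr ⟨Finset.mem_univ _,
          ceq_of_gap_zero k hgk⟩
        have hjk1 : j ≠ k + 1 := by
          intro hc
          exact fin_ne_add_two hn3 j (by rw [← hjk, ← hc])
        have hjkne : j ≠ k := fun hc => fin_ne_add_one hn j (hc.trans hjk)
        have hkk1 : k ≠ k + 1 := fin_ne_add_one hn k
        have hsub3 : ({j, k, k+1} : Finset (Fin n)) ⊆ cls x k := by
          intro z hz
          simp only [Finset.mem_insert, Finset.mem_singleton] at hz
          rcases hz with h | h | h <;> rw [h]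
          · exact hjmem
          · exact mem_cls_self x k
          · exact hk1mem
        have hc3 : 3 ≤ (cls x k).card := by
          have := Finset.card_le_card hsub3
          rw [Finset.card_insert_of_notMem (by simp [hjkne, hjk1]),
            Finset.card_insert_of_notMem (by simp [hkk1]),
            Finset.card_singleton] at this
          omega
        have hc3' : (3:ℝ) ≤ ((cls x k).card : ℝ) := by exact_mod_cast hc3
        calc profit k x ≤ (ra + rb) / (2 * ((cls x k).card : ℝ)) := hub
          _ < maxGap x / 2 := by
              rw [div_lt_div_iff₀ (by linarith) (by norm_num)]
              nlinarith
      · -- gap k = 0, gap j > 0 : ra ≤ gap x j < M, m ≥ 2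
        have hgjpos : 0 < gap x j := lt_of_le_of_ne hgj0 (Ne.symm hgj)
        have hgjlt : gap x j < maxGap x := by linarith [hgk]
        have hgjle1 : gap x j ≤ 1 := gap_le_one hx0 hmono hx1 j
        have hk1mem : k+1 ∈ cls x k := Finset.mem_filter.mpr ⟨Finset.mem_univ _,
          ceq_of_gap_zero k hgk⟩
        have hkk1 : k ≠ k + 1 := fin_ne_add_one hn k
        have hc2 : 2 ≤ (cls x k).card := by
          have hsub2 : ({k, k+1} : Finset (Fin n)) ⊆ cls x k := by
            intro z hz
            simp only [Finset.mem_insert, Finset.mem_singleton] at hz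
            rcases hz with h | h <;> rw [h]
            · exact mem_cls_self x k
            · exact hk1mem
          have := Finset.card_le_card hsub2
          rw [Finset.card_insert_of_notMem (by simp [hkk1]),
            Finset.card_singleton] at this
          omega
        have hc2' : (2:ℝ) ≤ ((cls x k).card : ℝ) := by exact_mod_cast hc2
        -- ra ≤ gap x j using hsep at j
        have hjnc : ¬ ceq (x j) (x k) := by
          intro hc
          rcases gap_01_of_ceq hx0 hmono hx1 j
            (by rw [← hjk]; exact ceq_symm hc) with h | h
          · exact hgj h
          · linarith
        have hraj : ra ≤ gap x j := by
          rcases hsep j with hc | ⟨d, hd1, hd2, hdrep⟩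
          · exact absurd hc hjnc
          · have hrep2 := gap_rep x j
            rw [← hjk] at hrep2
            rcases hdrep with h1 | h1 <;> rcases hrep2 with h2 | h2 <;> linarith
        calc profit k x ≤ (ra + rb) / (2 * ((cls x k).card : ℝ)) := hub
          _ < maxGap x / 2 := by
              rw [div_lt_div_iff₀ (by linarith) (by norm_num)]
              nlinarith
    · by_cases hgj : gap x j = 0
      · -- gap j = 0, gap k > 0 : rb ≤ gap x k < M, m ≥ 2
        have hgkpos : 0 < gap x k := lt_of_le_of_ne hgk0 (Ne.symm hgk)
        have hgklt : gap x k < maxGap x := by linarith [hgj]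
        have hgkle1 : gap x k ≤ 1 := gap_le_one hx0 hmono hx1 k
        have hjmem : j ∈ cls x k := Finset.mem_filter.mpr ⟨Finset.mem_univ _,
          ceq_symm (by rw [hjk]; exact ceq_of_gap_zero j hgj)⟩
        have hjkne : j ≠ k := fun hc => fin_ne_add_one hn j (hc.trans hjk)
        have hc2 : 2 ≤ (cls x k).card := by
          have hsub2 : ({j, k} : Finset (Fin n)) ⊆ cls x k := by
            intro z hz
            simp only [Finset.mem_insert, Finset.mem_singleton] at hz
            rcases hz with h | h <;> rw [h]
            · exact hjmem
            · exact mem_cls_self x k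
          have := Finset.card_le_card hsub2
          rw [Finset.card_insert_of_notMem (by simp [hjkne]),
            Finset.card_singleton] at this
          omega
        have hc2' : (2:ℝ) ≤ ((cls x k).card : ℝ) := by exact_mod_cast hc2
        have hknc : ¬ ceq (x (k+1)) (x k) := by
          intro hc
          rcases gap_01_of_ceq hx0 hmono hx1 k hc with h | h
          · exact hgk h
          · linarith
        have hrbk : rb ≤ gap x k := by
          rcases hsep (k+1) with hc | ⟨d, hd1, hd2, hdrep⟩
          · exact absurd hc hknc
          · have hrep2 := gap_rep x k
            rcases hdrep with h1 | h1 <;> rcases hrep2 with h2 | h2 <;> linarith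
        calc profit k x ≤ (ra + rb) / (2 * ((cls x k).card : ℝ)) := hub
          _ < maxGap x / 2 := by
              rw [div_lt_div_iff₀ (by linarith) (by norm_num)]
              nlinarith
      · -- both gaps positive : use index arcs directly
        have hgjpos : 0 < gap x j := lt_of_le_of_ne hgj0 (Ne.symm hgj)
        have hgkpos : 0 < gap x k := lt_of_le_of_ne hgk0 (Ne.symm hgk)
        have hbex2 : ∃ i, x i - x k = gap x k ∨ x i - x k = gap x k - 1 :=
          ⟨k+1, gap_rep x k⟩
        have haex2 : ∃ i, x k - x i = gap x j ∨ x k - x i = gap x j - 1 := by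
          refine ⟨j, ?_⟩
          have := gap_rep x j
          rw [← hjk] at this
          rcases this with h | h
          · exact Or.inl (by linarith)
          · exact Or.inr (by linarith)
        have hub2 := profit_le x k hξmem (ra := gap x j) (rb := gap x k)
          hgjpos (by linarith) hgkpos (by linarith) hbex2 haex2
        have hcge1 : (1:ℝ) ≤ ((cls x k).card : ℝ) := by exact_mod_cast hcard1
        calc profit k x ≤ (gap x j + gap x k) / (2 * ((cls x k).card : ℝ)) := hub2
          _ < maxGap x / 2 := by
              rw [div_lt_div_iff₀ (by linarith) (by norm_num)]
              nlinarith

end HT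

theorem equilibrium_iff_gap_condition {n : ℕ} [NeZero n] (hn : 2 ≤ n)
    (x : Fin n → ℝ) (hx0 : x 0 = 0) (hmono : Monotone x) (hx1 : ∀ j, x j ≤ 1) :
    IsEquilibrium x ↔ ∀ k : Fin n, maxGap x ≤ gap x k + gap x (k + 1) := by
  constructor
  · intro heq k
    rcases eq_or_lt_of_le hn with hn2 | hn3
    · -- n = 2
      have hkk1 : k ≠ k + 1 := HT.fin_ne_add_one hn k
      have huniv : (Finset.univ : Finset (Fin n)) = {k, k+1} := by
        apply Finset.ext
        intro i
        simp only [Finset.mem_univ, Finset.mem_insert, Finset.mem_singleton, true_iff]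
        have hi := i.isLt
        have hk := k.isLt
        by_cases h : (i:ℕ) = (k:ℕ)
        · exact Or.inl (Fin.ext h)
        · right
          rcases Nat.lt_or_ge ((k:ℕ)+1) n with h2 | h2
          · exact Fin.ext (by rw [HT.fin_val_add_one k h2]; omega)
          · rw [HT.fin_add_one_wrap k (by omega)]
            exact Fin.ext (by simp only [Fin.val_zero]; omega)
      have hsum : gap x k + gap x (k+1) = 1 := by
        rw [← Finset.sum_pair hkk1, ← huniv, HT.sum_gap hx0]
      rw [hsum]
      exact HT.maxGap_le_one hx0 hmono hx1
    · by_contra hfail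
      push_neg at hfail
      obtain ⟨μ, hμIcc, hdev⟩ := HT.dev_ge hn x hx0 hmono hx1 (k+1)
      have hub := HT.profit_x_lt (by omega) x hx0 hmono hx1 k (k+1) rfl hfail
      have hcmp := heq (k+1) μ hμIcc
      linarith
  · intro hC k x' hx'
    have hjk : k = (k - 1) + 1 := (sub_add_cancel k 1).symm
    have hj2 : k - 1 = (k - 1 - 1) + 1 := (sub_add_cancel (k-1) 1).symm
    exact le_trans (HT.dev_bound hn x hx0 hmono hx1 hC (k-1) k hjk x' hx')
      (HT.profit_x_ge hn x hx0 hmono hx1 hC (k-1-1) (k-1) k hj2 hjk)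
end
end
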